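/- arXiv:2212.07392 — 2 statements merged into one kernel-verified Lean document; each statement's English description precedes it below -/
import Mathlib

section
/- Verification of the exact two-soliton solution: the function u(x,t) = [8e^{4it}(9e^{-4x}+16e^{4x}) − 32e^{16it}(4e^{-2x}+9e^{2x})] / [−128cos(12t) + 4e^{-6x} + 16e^{6x} + 81e^{-2x} + 64e^{2x}] solves the focusing cubic nonlinear Schrödinger equation i∂ₜu = −∂ₓₓu − 2|u|²u on ℝ × ℝ, and the denominator is strictly positive for all (x,t) ∈ ℝ². -/
/-- Denominator of the exact two-soliton solution. -/
noncomputable def solDenom (x t : ℝ) : ℝ :=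
  -128 * Real.cos (12 * t) + 4 * Real.exp (-6 * x) + 16 * Real.exp (6 * x)
    + 81 * Real.exp (-2 * x) + 64 * Real.exp (2 * x)

/-- Numerator of the exact two-soliton solution. -/
noncomputable def solNum (x t : ℝ) : ℂ :=
  8 * Complex.exp (4 * Complex.I * (t : ℂ))
      * ((9 * Real.exp (-4 * x) + 16 * Real.exp (4 * x) : ℝ) : ℂ)
    - 32 * Complex.exp (16 * Complex.I * (t : ℂ))
      * ((4 * Real.exp (-2 * x) + 9 * Real.exp (2 * x) : ℝ) : ℂ)

/-- The exact two-soliton solution. -/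
noncomputable def twoSoliton (x t : ℝ) : ℂ := solNum x t / ((solDenom x t : ℝ) : ℂ)

/- ### Auxiliary definitions: explicit derivatives -/

/-- x-derivative of the denominator. -/
noncomputable def solDenomX (x : ℝ) : ℝ :=
  -24 * Real.exp (-6 * x) + 96 * Real.exp (6 * x)
    - 162 * Real.exp (-2 * x) + 128 * Real.exp (2 * x)

/-- second x-derivative of the denominator. -/
noncomputable def solDenomXX (x : ℝ) : ℝ :=
  144 * Real.exp (-6 * x) + 576 * Real.exp (6 * x)
    + 324 * Real.exp (-2 * x) + 256 * Real.exp (2 * x)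

/-- t-derivative of the denominator. -/
noncomputable def solDenomT (t : ℝ) : ℝ := 1536 * Real.sin (12 * t)

/-- x-derivative of the numerator. -/
noncomputable def solNumX (x t : ℝ) : ℂ :=
  8 * Complex.exp (4 * Complex.I * (t : ℂ))
      * ((-36 * Real.exp (-4 * x) + 64 * Real.exp (4 * x) : ℝ) : ℂ)
    - 32 * Complex.exp (16 * Complex.I * (t : ℂ))
      * ((-8 * Real.exp (-2 * x) + 18 * Real.exp (2 * x) : ℝ) : ℂ)

/-- second x-derivative of the numerator. -/
noncomputable def solNumXX (x t : ℝ) : ℂ :=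
  8 * Complex.exp (4 * Complex.I * (t : ℂ))
      * ((144 * Real.exp (-4 * x) + 256 * Real.exp (4 * x) : ℝ) : ℂ)
    - 32 * Complex.exp (16 * Complex.I * (t : ℂ))
      * ((16 * Real.exp (-2 * x) + 36 * Real.exp (2 * x) : ℝ) : ℂ)

/-- t-derivative of the numerator. -/
noncomputable def solNumT (x t : ℝ) : ℂ :=
  32 * Complex.I * Complex.exp (4 * Complex.I * (t : ℂ))
      * ((9 * Real.exp (-4 * x) + 16 * Real.exp (4 * x) : ℝ) : ℂ)
    - 512 * Complex.I * Complex.exp (16 * Complex.I * (t : ℂ))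
      * ((4 * Real.exp (-2 * x) + 9 * Real.exp (2 * x) : ℝ) : ℂ)

/- ### Basic derivative lemmas -/

lemma hexpR (c x : ℝ) : HasDerivAt (fun z : ℝ => Real.exp (c * z)) (c * Real.exp (c * x)) x := by
  have h := (Real.hasDerivAt_exp (c * x)).comp x ((hasDerivAt_id x).const_mul c)
  simpa [Function.comp_def, mul_comm] using h

lemma hexpC (c : ℂ) (t : ℝ) :
    HasDerivAt (fun s : ℝ => Complex.exp (c * (s : ℂ))) (c * Complex.exp (c * (t : ℂ))) t := by
  have h : HasDerivAt (fun z : ℂ => Complex.exp (c * z)) (c * Complex.exp (c * (t : ℂ))) (t : ℂ) := by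
    have := (Complex.hasDerivAt_exp (c * (t : ℂ))).comp (t : ℂ)
      ((hasDerivAt_id (t : ℂ)).const_mul c)
    simpa [Function.comp_def, mul_comm] using this
  exact h.comp_ofReal

lemma hcosR (c t : ℝ) :
    HasDerivAt (fun s : ℝ => Real.cos (c * s)) (-c * Real.sin (c * t)) t := by
  have h := (Real.hasDerivAt_cos (c * t)).comp t ((hasDerivAt_id t).const_mul c)
  have hv : -c * Real.sin (c * t) = -Real.sin (c * t) * (c * 1) := by ring
  rw [hv]; exact h

lemma hD_x (t x : ℝ) : HasDerivAt (fun z => solDenom z t) (solDenomX x) x := by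
  have h := (((((hasDerivAt_const x (-128 * Real.cos (12 * t))).add
      ((hexpR (-6) x).const_mul 4)).add ((hexpR 6 x).const_mul 16)).add
      ((hexpR (-2) x).const_mul 81)).add ((hexpR 2 x).const_mul 64))
  have hv : solDenomX x = 0 + 4 * (-6 * Real.exp (-6 * x)) + 16 * (6 * Real.exp (6 * x))
      + 81 * (-2 * Real.exp (-2 * x)) + 64 * (2 * Real.exp (2 * x)) := by
    unfold solDenomX; ring
  rw [hv]; exact h

lemma hDX_x (t x : ℝ) : HasDerivAt (fun z => solDenomX z) (solDenomXX x) x := by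
  have h := ((((hexpR (-6) x).const_mul (-24)).add ((hexpR 6 x).const_mul 96)).sub
      ((hexpR (-2) x).const_mul 162)).add ((hexpR 2 x).const_mul 128)
  have hv : solDenomXX x = -24 * (-6 * Real.exp (-6 * x)) + 96 * (6 * Real.exp (6 * x))
      - 162 * (-2 * Real.exp (-2 * x)) + 128 * (2 * Real.exp (2 * x)) := by
    unfold solDenomXX; ring
  rw [hv]
  exact h

lemma hD_t (x t : ℝ) : HasDerivAt (fun s => solDenom x s) (solDenomT t) t := by
  have h := ((((((hcosR 12 t).const_mul (-128)).add_const (4 * Real.exp (-6 * x))).add_const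
      (16 * Real.exp (6 * x))).add_const (81 * Real.exp (-2 * x))).add_const
      (64 * Real.exp (2 * x)))
  have hv : solDenomT t = -128 * (-12 * Real.sin (12 * t)) := by
    unfold solDenomT; ring
  rw [hv]; exact h

lemma hN_x (t x : ℝ) : HasDerivAt (fun z => solNum z t) (solNumX x t) x := by
  have h1 : HasDerivAt (fun z : ℝ => ((9 * Real.exp (-4 * z) + 16 * Real.exp (4 * z) : ℝ) : ℂ))
      ((9 * (-4 * Real.exp (-4 * x)) + 16 * (4 * Real.exp (4 * x)) : ℝ) : ℂ) x :=
    (((hexpR (-4) x).const_mul 9).add ((hexpR 4 x).const_mul 16)).ofReal_comp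
  have h2 : HasDerivAt (fun z : ℝ => ((4 * Real.exp (-2 * z) + 9 * Real.exp (2 * z) : ℝ) : ℂ))
      ((4 * (-2 * Real.exp (-2 * x)) + 9 * (2 * Real.exp (2 * x)) : ℝ) : ℂ) x :=
    (((hexpR (-2) x).const_mul 4).add ((hexpR 2 x).const_mul 9)).ofReal_comp
  have h := (h1.const_mul (8 * Complex.exp (4 * Complex.I * (t : ℂ)))).sub
      (h2.const_mul (32 * Complex.exp (16 * Complex.I * (t : ℂ))))
  have hv : solNumX x t =
      8 * Complex.exp (4 * Complex.I * (t : ℂ))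
          * ((9 * (-4 * Real.exp (-4 * x)) + 16 * (4 * Real.exp (4 * x)) : ℝ) : ℂ)
        - 32 * Complex.exp (16 * Complex.I * (t : ℂ))
          * ((4 * (-2 * Real.exp (-2 * x)) + 9 * (2 * Real.exp (2 * x)) : ℝ) : ℂ) := by
    unfold solNumX; push_cast; ring
  rw [hv]; exact h

lemma hNX_x (t x : ℝ) : HasDerivAt (fun z => solNumX z t) (solNumXX x t) x := by
  have h1 : HasDerivAt (fun z : ℝ => ((-36 * Real.exp (-4 * z) + 64 * Real.exp (4 * z) : ℝ) : ℂ))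
      ((-36 * (-4 * Real.exp (-4 * x)) + 64 * (4 * Real.exp (4 * x)) : ℝ) : ℂ) x :=
    (((hexpR (-4) x).const_mul (-36)).add ((hexpR 4 x).const_mul 64)).ofReal_comp
  have h2 : HasDerivAt (fun z : ℝ => ((-8 * Real.exp (-2 * z) + 18 * Real.exp (2 * z) : ℝ) : ℂ))
      ((-8 * (-2 * Real.exp (-2 * x)) + 18 * (2 * Real.exp (2 * x)) : ℝ) : ℂ) x :=
    (((hexpR (-2) x).const_mul (-8)).add ((hexpR 2 x).const_mul 18)).ofReal_comp
  have h := (h1.const_mul (8 * Complex.exp (4 * Complex.I * (t : ℂ)))).sub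
      (h2.const_mul (32 * Complex.exp (16 * Complex.I * (t : ℂ))))
  have hv : solNumXX x t =
      8 * Complex.exp (4 * Complex.I * (t : ℂ))
          * ((-36 * (-4 * Real.exp (-4 * x)) + 64 * (4 * Real.exp (4 * x)) : ℝ) : ℂ)
        - 32 * Complex.exp (16 * Complex.I * (t : ℂ))
          * ((-8 * (-2 * Real.exp (-2 * x)) + 18 * (2 * Real.exp (2 * x)) : ℝ) : ℂ) := by
    unfold solNumXX; push_cast; ring
  rw [hv]; exact h

lemma hN_t (x t : ℝ) : HasDerivAt (fun s => solNum x s) (solNumT x t) t := by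
  have h1 := ((hexpC (4 * Complex.I) t).const_mul (8 : ℂ)).mul_const
      ((9 * Real.exp (-4 * x) + 16 * Real.exp (4 * x) : ℝ) : ℂ)
  have h2 := ((hexpC (16 * Complex.I) t).const_mul (32 : ℂ)).mul_const
      ((4 * Real.exp (-2 * x) + 9 * Real.exp (2 * x) : ℝ) : ℂ)
  have h := h1.sub h2
  have hv : solNumT x t =
      8 * (4 * Complex.I * Complex.exp (4 * Complex.I * (t : ℂ)))
          * ((9 * Real.exp (-4 * x) + 16 * Real.exp (4 * x) : ℝ) : ℂ)
        - 32 * (16 * Complex.I * Complex.exp (16 * Complex.I * (t : ℂ)))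
          * ((4 * Real.exp (-2 * x) + 9 * Real.exp (2 * x) : ℝ) : ℂ) := by
    unfold solNumT; ring
  rw [hv]; exact h


lemma key_div (N Nx Nxx Nt Nb D Dx Dxx Dt : ℂ) (hD : D ≠ 0)
    (h : Complex.I * (Nt * D - N * Dt) * D ^ 2 =
      -((Nxx * D + Nx * Dx - (Nx * Dx + N * Dxx)) * D ^ 2
          - (Nx * D - N * Dx) * (Dx * D + D * Dx))
        - 2 * (N * Nb * N) * D) :
    Complex.I * ((Nt * D - N * Dt) / D ^ 2) =
      -(((Nxx * D + Nx * Dx - (Nx * Dx + N * Dxx)) * D ^ 2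
          - (Nx * D - N * Dx) * (Dx * D + D * Dx)) / (D ^ 2) ^ 2)
        - 2 * (N / D * (Nb / D)) * (N / D) := by
  field_simp
  refine mul_left_cancel₀ hD ?_
  linear_combination h

/- ### positivity of the denominator -/

lemma solDenom_pos (x t : ℝ) : 0 < solDenom x t := by
  unfold solDenom
  have h1 : Real.cos (12 * t) ≤ 1 := Real.cos_le_one _
  have h2 : (0:ℝ) < Real.exp (-6 * x) := Real.exp_pos _
  have h3 : (0:ℝ) < Real.exp (6 * x) := Real.exp_pos _
  have h4 : Real.exp (-2 * x) * Real.exp (2 * x) = 1 := by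
    rw [← Real.exp_add]; norm_num
  have h5 := sq_nonneg (9 * Real.exp (-x) - 8 * Real.exp x)
  have h6 : Real.exp (-x) ^ 2 = Real.exp (-2 * x) := by
    rw [← Real.exp_nat_mul]; norm_num
  have h7 : Real.exp x ^ 2 = Real.exp (2 * x) := by
    rw [← Real.exp_nat_mul]; norm_num
  have h8 : Real.exp (-x) * Real.exp x = 1 := by
    rw [← Real.exp_add]; norm_num
  nlinarith [sq_nonneg (9 * Real.exp (-x) - 8 * Real.exp x)]

/- ### the main theorem -/

set_option maxHeartbeats 4000000 in
set_option maxRecDepth 100000 in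
/-- Verification of the exact two-soliton solution: the denominator is strictly positive on
all of `ℝ²`, and the function solves the focusing cubic nonlinear Schrödinger equation
`i ∂ₜ u = − ∂ₓₓ u − 2|u|² u` on `ℝ × ℝ`. -/
theorem twoSoliton_solves_NLS :
    (∀ x t : ℝ, 0 < solDenom x t) ∧
      (∀ x t : ℝ,
        Complex.I * deriv (fun s => twoSoliton x s) t
          = - deriv (fun y => deriv (fun z => twoSoliton z t) y) x
            - 2 * (‖twoSoliton x t‖ : ℂ) ^ 2 * twoSoliton x t) := by
  refine ⟨solDenom_pos, fun x t => ?_⟩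
  have hne : ∀ y : ℝ, ((solDenom y t : ℝ) : ℂ) ≠ 0 := fun y =>
    Complex.ofReal_ne_zero.mpr (ne_of_gt (solDenom_pos y t))
  have hnet : ((solDenom x t : ℝ) : ℂ) ≠ 0 := hne x
  -- time derivative
  have hut : deriv (fun s => twoSoliton x s) t =
      (solNumT x t * ((solDenom x t : ℝ) : ℂ) - solNum x t * ((solDenomT t : ℝ) : ℂ))
        / ((solDenom x t : ℝ) : ℂ) ^ 2 :=
    (((hN_t x t).div ((hD_t x t).ofReal_comp) hnet)).deriv
  -- first space derivative (as a function)
  have hux : (fun y => deriv (fun z => twoSoliton z t) y) =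
      fun y => (solNumX y t * ((solDenom y t : ℝ) : ℂ) - solNum y t * ((solDenomX y : ℝ) : ℂ))
        / ((solDenom y t : ℝ) : ℂ) ^ 2 := by
    funext y
    exact (((hN_x t y).div ((hD_x t y).ofReal_comp) (hne y))).deriv
  -- second space derivative
  have huxx : deriv (fun y =>
      (solNumX y t * ((solDenom y t : ℝ) : ℂ) - solNum y t * ((solDenomX y : ℝ) : ℂ))
        / ((solDenom y t : ℝ) : ℂ) ^ 2) x =
      (((solNumXX x t * ((solDenom x t : ℝ) : ℂ) + solNumX x t * ((solDenomX x : ℝ) : ℂ))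
          - (solNumX x t * ((solDenomX x : ℝ) : ℂ) + solNum x t * ((solDenomXX x : ℝ) : ℂ)))
          * ((solDenom x t : ℝ) : ℂ) ^ 2
        - (solNumX x t * ((solDenom x t : ℝ) : ℂ) - solNum x t * ((solDenomX x : ℝ) : ℂ))
          * (((solDenomX x : ℝ) : ℂ) * ((solDenom x t : ℝ) : ℂ)
              + ((solDenom x t : ℝ) : ℂ) * ((solDenomX x : ℝ) : ℂ)))
        / (((solDenom x t : ℝ) : ℂ) ^ 2) ^ 2 := by
    refine HasDerivAt.deriv ?_
    have hB : HasDerivAt (fun y : ℝ => ((solDenom y t : ℝ) : ℂ) ^ 2)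
        (((solDenomX x : ℝ) : ℂ) * ((solDenom x t : ℝ) : ℂ)
          + ((solDenom x t : ℝ) : ℂ) * ((solDenomX x : ℝ) : ℂ)) x := by
      have h := ((hD_x t x).ofReal_comp).mul ((hD_x t x).ofReal_comp)
      have hfun : (fun y : ℝ => ((solDenom y t : ℝ) : ℂ) ^ 2)
          = fun y : ℝ => ((solDenom y t : ℝ) : ℂ) * ((solDenom y t : ℝ) : ℂ) := by
        funext y; ring
      rw [hfun]; exact h
    exact ((((hNX_x t x).mul ((hD_x t x).ofReal_comp)).sub
        ((hN_x t x).mul ((hDX_x t x).ofReal_comp))).div hB (pow_ne_zero 2 hnet))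
  -- norm squared
  have hnorm : ((‖twoSoliton x t‖ : ℝ) : ℂ) ^ 2
      = twoSoliton x t * (starRingEnd ℂ) (twoSoliton x t) := by
    rw [Complex.mul_conj, Complex.normSq_eq_norm_sq]
    push_cast; ring
  have hconj : (starRingEnd ℂ) (twoSoliton x t) =
      (8 * Complex.exp (-(4 * Complex.I * (t : ℂ)))
          * ((9 * Real.exp (-4 * x) + 16 * Real.exp (4 * x) : ℝ) : ℂ)
        - 32 * Complex.exp (-(16 * Complex.I * (t : ℂ)))
          * ((4 * Real.exp (-2 * x) + 9 * Real.exp (2 * x) : ℝ) : ℂ))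
        / ((solDenom x t : ℝ) : ℂ) := by
    unfold twoSoliton solNum
    rw [map_div₀, map_sub, map_mul, map_mul, map_mul, map_mul]
    rw [← Complex.exp_conj, ← Complex.exp_conj]
    simp only [map_mul, Complex.conj_I, Complex.conj_ofReal, map_ofNat]
    ring_nf
  rw [hut, hux, huxx, hnorm, hconj,
    show twoSoliton x t = solNum x t / ((solDenom x t : ℝ) : ℂ) from rfl]
  refine key_div _ _ _ _ _ _ _ _ _ hnet ?_
  unfold solNum solNumX solNumXX solNumT solDenom solDenomX solDenomXX solDenomT
  push_cast
  have hEn : ∀ (n : ℕ), Complex.exp ((n : ℂ) * (x:ℂ)) = Complex.exp ((x:ℂ)) ^ n :=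
    fun n => Complex.exp_nat_mul _ n
  have hFn : ∀ (n : ℕ), Complex.exp ((n : ℂ) * (-(x:ℂ))) = Complex.exp (-(x:ℂ)) ^ n :=
    fun n => Complex.exp_nat_mul _ n
  have hBn : ∀ (n : ℕ), Complex.exp ((n : ℂ) * (Complex.I * (t:ℂ)))
      = Complex.exp (Complex.I * (t:ℂ)) ^ n := fun n => Complex.exp_nat_mul _ n
  have hCn : ∀ (n : ℕ), Complex.exp ((n : ℂ) * (-(Complex.I * (t:ℂ))))
      = Complex.exp (-(Complex.I * (t:ℂ))) ^ n := fun n => Complex.exp_nat_mul _ n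
  have h1 : Complex.exp ((-6 : ℂ) * (x:ℂ)) = Complex.exp (-(x:ℂ)) ^ 6 := by
    rw [show ((-6 : ℂ) * (x:ℂ)) = (((6:ℕ):ℂ) * (-(x:ℂ))) by push_cast; ring, hFn]
  have h2 : Complex.exp ((6 : ℂ) * (x:ℂ)) = Complex.exp ((x:ℂ)) ^ 6 := by
    rw [show ((6 : ℂ) * (x:ℂ)) = (((6:ℕ):ℂ) * (x:ℂ)) by push_cast; ring, hEn]
  have h3 : Complex.exp ((-4 : ℂ) * (x:ℂ)) = Complex.exp (-(x:ℂ)) ^ 4 := by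
    rw [show ((-4 : ℂ) * (x:ℂ)) = (((4:ℕ):ℂ) * (-(x:ℂ))) by push_cast; ring, hFn]
  have h4 : Complex.exp ((4 : ℂ) * (x:ℂ)) = Complex.exp ((x:ℂ)) ^ 4 := by
    rw [show ((4 : ℂ) * (x:ℂ)) = (((4:ℕ):ℂ) * (x:ℂ)) by push_cast; ring, hEn]
  have h5 : Complex.exp ((-2 : ℂ) * (x:ℂ)) = Complex.exp (-(x:ℂ)) ^ 2 := by
    rw [show ((-2 : ℂ) * (x:ℂ)) = (((2:ℕ):ℂ) * (-(x:ℂ))) by push_cast; ring, hFn]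
  have h6 : Complex.exp ((2 : ℂ) * (x:ℂ)) = Complex.exp ((x:ℂ)) ^ 2 := by
    rw [show ((2 : ℂ) * (x:ℂ)) = (((2:ℕ):ℂ) * (x:ℂ)) by push_cast; ring, hEn]
  have ht1 : Complex.exp (4 * Complex.I * (t:ℂ)) = Complex.exp (Complex.I * (t:ℂ)) ^ 4 := by
    rw [show (4 * Complex.I * (t:ℂ)) = (((4:ℕ):ℂ) * (Complex.I * (t:ℂ))) by push_cast; ring, hBn]
  have ht2 : Complex.exp (16 * Complex.I * (t:ℂ)) = Complex.exp (Complex.I * (t:ℂ)) ^ 16 := by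
    rw [show (16 * Complex.I * (t:ℂ)) = (((16:ℕ):ℂ) * (Complex.I * (t:ℂ))) by push_cast; ring, hBn]
  have ht3 : Complex.exp (-(4 * Complex.I * (t:ℂ))) = Complex.exp (-(Complex.I * (t:ℂ))) ^ 4 := by
    rw [show (-(4 * Complex.I * (t:ℂ))) = (((4:ℕ):ℂ) * (-(Complex.I * (t:ℂ)))) by push_cast; ring,
      hCn]
  have ht4 : Complex.exp (-(16 * Complex.I * (t:ℂ))) = Complex.exp (-(Complex.I * (t:ℂ))) ^ 16 := by
    rw [show (-(16 * Complex.I * (t:ℂ))) = (((16:ℕ):ℂ) * (-(Complex.I * (t:ℂ)))) by push_cast; ring,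
      hCn]
  have hc : Complex.cos (12 * (t:ℂ)) = (Complex.exp (Complex.I * (t:ℂ)) ^ 12
      + Complex.exp (-(Complex.I * (t:ℂ))) ^ 12) / 2 := by
    have hdef : Complex.cos (12 * (t:ℂ)) =
        (Complex.exp (12 * (t:ℂ) * Complex.I) + Complex.exp (-(12 * (t:ℂ)) * Complex.I)) / 2 := rfl
    rw [hdef, show (12 * (t:ℂ) * Complex.I) = (((12:ℕ):ℂ) * (Complex.I * (t:ℂ))) by push_cast; ring,
      show (-(12 * (t:ℂ)) * Complex.I) = (((12:ℕ):ℂ) * (-(Complex.I * (t:ℂ)))) by push_cast; ring,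
      hBn, hCn]
  have hs : Complex.sin (12 * (t:ℂ)) = (Complex.exp (-(Complex.I * (t:ℂ))) ^ 12
      - Complex.exp (Complex.I * (t:ℂ)) ^ 12) * Complex.I / 2 := by
    have hdef : Complex.sin (12 * (t:ℂ)) =
        (Complex.exp (-(12 * (t:ℂ)) * Complex.I) - Complex.exp (12 * (t:ℂ) * Complex.I))
          * Complex.I / 2 := rfl
    rw [hdef, show (12 * (t:ℂ) * Complex.I) = (((12:ℕ):ℂ) * (Complex.I * (t:ℂ))) by push_cast; ring,
      show (-(12 * (t:ℂ)) * Complex.I) = (((12:ℕ):ℂ) * (-(Complex.I * (t:ℂ)))) by push_cast; ring,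
      hBn, hCn]
  rw [h1, h2, h3, h4, h5, h6, ht1, ht2, ht3, ht4, hc, hs]
  have hEF : Complex.exp ((x:ℂ)) * Complex.exp (-(x:ℂ)) = 1 := by
    rw [← Complex.exp_add]; simp
  have hBC : Complex.exp (Complex.I * (t:ℂ)) * Complex.exp (-(Complex.I * (t:ℂ))) = 1 := by
    rw [← Complex.exp_add]; simp
  set E : ℂ := Complex.exp ((x:ℂ)) with hEdef
  set F : ℂ := Complex.exp (-(x:ℂ)) with hFdef
  set B : ℂ := Complex.exp (Complex.I * (t:ℂ)) with hBdef
  set C : ℂ := Complex.exp (-(Complex.I * (t:ℂ))) with hCdef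
  linear_combination ((((((((((-3937730560 : ℂ) * B ^ 4 * C ^ 12 + ((-1226506240 : ℂ) * B ^ 8 * C ^ 16 + (4518707200 : ℂ) * B ^ 16)) + ((7229931520 : ℂ) * B ^ 16 * C ^ 24 + ((-2453012480 : ℂ) * B ^ 20 * C ^ 4 + (-2065694720 : ℂ) * B ^ 20 * C ^ 28))) + (((8262778880 : ℂ) * B ^ 28 * C ^ 12 + ((-10328473600 : ℂ) * B ^ 32 * C ^ 16 + (1032847360 : ℂ) * B ^ 40)) + ((-1032847360 : ℂ) * B ^ 44 * C ^ 4 + ((2809430016 : ℂ) * F ^ 2 * B ^ 4 + (503316480 : ℂ) * F ^ 2 * B ^ 4 * C ^ 24)))) + ((((283115520 : ℂ) * F ^ 2 * B ^ 8 * C ^ 4 + ((301989888 : ℂ) * F ^ 2 * B ^ 8 * C ^ 28 + (-8399683584 : ℂ) * F ^ 2 * B ^ 16 * C ^ 12)) + ((5105811456 : ℂ) * F ^ 2 * B ^ 20 * C ^ 16 + ((-3710533632 : ℂ) * F ^ 2 * B ^ 28 + (2703900672 : ℂ) * F ^ 2 * B ^ 32 * C ^ 4))) + (((1811939328 : ℂ)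 * F ^ 2 * B ^ 32 * C ^ 28 + ((1811939328 : ℂ) * F ^ 2 * B ^ 44 * C ^ 16 + (-693633024 : ℂ) * F ^ 4 * B ^ 4 * C ^ 12)) + ((-891813888 : ℂ) * F ^ 4 * B ^ 8 * C ^ 16 + ((2759852032 : ℂ) * F ^ 4 * B ^ 16 + (339738624 : ℂ) * F ^ 4 * B ^ 16 * C ^ 24))))) + (((((-1528823808 : ℂ) * F ^ 4 * B ^ 20 * C ^ 4 + ((-1358954496 : ℂ) * F ^ 4 * B ^ 20 * C ^ 28 + (452984832 : ℂ) * F ^ 4 * B ^ 28 * C ^ 12)) + ((-4854906880 : ℂ) * F ^ 4 * B ^ 32 * C ^ 16 + ((113246208 : ℂ) * F ^ 4 * B ^ 40 + (-679477248 : ℂ) * F ^ 4 * B ^ 44 * C ^ 4))) + (((267321344 : ℂ) * F ^ 6 * B ^ 4 + ((334430208 : ℂ) * F ^ 6 * B ^ 8 * C ^ 4 + (191102976 : ℂ) * F ^ 6 * B ^ 8 * C ^ 28)) + ((-919076864 : ℂ) * F ^ 6 * B ^ 16 * C ^ 12 + ((2724331520 : ℂ) * F ^ 6 * B ^ 20 *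 C ^ 16 + (-531759104 : ℂ) * F ^ 6 * B ^ 28)))) + ((((1457717248 : ℂ) * F ^ 6 * B ^ 32 * C ^ 4 + ((154140672 : ℂ) * F ^ 8 * B ^ 4 * C ^ 12 + (-345673728 : ℂ) * F ^ 8 * B ^ 8 * C ^ 16)) + ((590002176 : ℂ) * F ^ 8 * B ^ 16 + ((-691347456 : ℂ) * F ^ 8 * B ^ 20 * C ^ 4 + (-113246208 : ℂ) * F ^ 8 * B ^ 32 * C ^ 16))) + (((-162791424 : ℂ) * F ^ 10 * B ^ 4 + ((63700992 : ℂ) * F ^ 10 * B ^ 8 * C ^ 4 + (84934656 : ℂ) * F ^ 10 * B ^ 20 * C ^ 16)) + ((7077888 : ℂ) * F ^ 10 * B ^ 28 + ((42467328 : ℂ) * F ^ 10 * B ^ 32 * C ^ 4 + (-11943936 : ℂ) * F ^ 12 * B ^ 8 * C ^ 16)))))) + ((((((-7110656 : ℂ) * F ^ 12 * B ^ 16 + ((-23887872 : ℂ) * F ^ 12 * B ^ 20 * C ^ 4 + (-6291456 : ℂ) * F ^ 14 * B ^ 4)) + ((-884736 : ℂ) * F ^ 16 * B ^ 16 + ((-3937730560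 : ℂ) * E * F * B ^ 4 * C ^ 12 + (-1226506240 : ℂ) * E * F * B ^ 8 * C ^ 16))) + (((4518707200 : ℂ) * E * F * B ^ 16 + ((7229931520 : ℂ) * E * F * B ^ 16 * C ^ 24 + (-2453012480 : ℂ) * E * F * B ^ 20 * C ^ 4)) + ((-2065694720 : ℂ) * E * F * B ^ 20 * C ^ 28 + ((8262778880 : ℂ) * E * F * B ^ 28 * C ^ 12 + (-10328473600 : ℂ) * E * F * B ^ 32 * C ^ 16)))) + ((((1032847360 : ℂ) * E * F * B ^ 40 + ((-1032847360 : ℂ) * E * F * B ^ 44 * C ^ 4 + (2809430016 : ℂ) * E * F ^ 3 * B ^ 4)) + ((503316480 : ℂ) * E * F ^ 3 * B ^ 4 * C ^ 24 + ((283115520 : ℂ) * E * F ^ 3 * B ^ 8 * C ^ 4 + (301989888 : ℂ) * E * F ^ 3 * B ^ 8 * C ^ 28))) + (((-8399683584 : ℂ) * E * F ^ 3 * B ^ 16 * C ^ 12 + ((5105811456 : ℂ) * E * F ^ 3 * B ^ 20 * C ^ 16 + (-3710533632 : ℂ) * E * F ^ 3 * B ^ 28)) + ((2703900672 : ℂ)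 * E * F ^ 3 * B ^ 32 * C ^ 4 + ((1811939328 : ℂ) * E * F ^ 3 * B ^ 32 * C ^ 28 + (1811939328 : ℂ) * E * F ^ 3 * B ^ 44 * C ^ 16))))) + (((((-693633024 : ℂ) * E * F ^ 5 * B ^ 4 * C ^ 12 + ((-891813888 : ℂ) * E * F ^ 5 * B ^ 8 * C ^ 16 + (2759852032 : ℂ) * E * F ^ 5 * B ^ 16)) + ((339738624 : ℂ) * E * F ^ 5 * B ^ 16 * C ^ 24 + ((-1528823808 : ℂ) * E * F ^ 5 * B ^ 20 * C ^ 4 + (-1358954496 : ℂ) * E * F ^ 5 * B ^ 20 * C ^ 28))) + (((452984832 : ℂ) * E * F ^ 5 * B ^ 28 * C ^ 12 + ((-4854906880 : ℂ) * E * F ^ 5 * B ^ 32 * C ^ 16 + (113246208 : ℂ) * E * F ^ 5 * B ^ 40)) + ((-679477248 : ℂ) * E * F ^ 5 * B ^ 44 * C ^ 4 + ((267321344 : ℂ) * E * F ^ 7 * B ^ 4 + (334430208 : ℂ) * E * F ^ 7 * B ^ 8 * C ^ 4)))) + ((((191102976 : ℂ) * E * F ^ 7 * B ^ 8 * C ^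 28 + ((-919076864 : ℂ) * E * F ^ 7 * B ^ 16 * C ^ 12 + (2724331520 : ℂ) * E * F ^ 7 * B ^ 20 * C ^ 16)) + ((-531759104 : ℂ) * E * F ^ 7 * B ^ 28 + ((1457717248 : ℂ) * E * F ^ 7 * B ^ 32 * C ^ 4 + (154140672 : ℂ) * E * F ^ 9 * B ^ 4 * C ^ 12))) + (((-345673728 : ℂ) * E * F ^ 9 * B ^ 8 * C ^ 16 + ((590002176 : ℂ) * E * F ^ 9 * B ^ 16 + (-691347456 : ℂ) * E * F ^ 9 * B ^ 20 * C ^ 4)) + ((-113246208 : ℂ) * E * F ^ 9 * B ^ 32 * C ^ 16 + ((-162791424 : ℂ) * E * F ^ 11 * B ^ 4 + (63700992 : ℂ) * E * F ^ 11 * B ^ 8 * C ^ 4))))))) + (((((((84934656 : ℂ) * E * F ^ 11 * B ^ 20 * C ^ 16 + ((7077888 : ℂ) * E * F ^ 11 * B ^ 28 + (42467328 : ℂ) * E * F ^ 11 * B ^ 32 * C ^ 4)) + ((-11943936 : ℂ) * E * F ^ 13 * B ^ 8 * C ^ 16 + ((-7110656 : ℂ) * E * F ^ 13 * B ^ 16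 + (-23887872 : ℂ) * E * F ^ 13 * B ^ 20 * C ^ 4))) + (((-6291456 : ℂ) * E * F ^ 15 * B ^ 4 + ((-884736 : ℂ) * E * F ^ 17 * B ^ 16 + (2504523776 : ℂ) * E ^ 2 * B ^ 4)) + ((1132462080 : ℂ) * E ^ 2 * B ^ 4 * C ^ 24 + ((637009920 : ℂ) * E ^ 2 * B ^ 8 * C ^ 4 + (679477248 : ℂ) * E ^ 2 * B ^ 8 * C ^ 28)))) + ((((-11265900544 : ℂ) * E ^ 2 * B ^ 16 * C ^ 12 + ((7671382016 : ℂ) * E ^ 2 * B ^ 20 * C ^ 16 + (-6440353792 : ℂ) * E ^ 2 * B ^ 28)) + ((4175429632 : ℂ) * E ^ 2 * B ^ 32 * C ^ 4 + ((4076863488 : ℂ) * E ^ 2 * B ^ 32 * C ^ 28 + (4076863488 : ℂ) * E ^ 2 * B ^ 44 * C ^ 16))) + (((-3937730560 : ℂ) * E ^ 2 * F ^ 2 * B ^ 4 * C ^ 12 + ((-1226506240 : ℂ) * E ^ 2 * F ^ 2 * B ^ 8 * C ^ 16 + (4518707200 : ℂ) * E ^ 2 * F ^ 2 * B ^ 16))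 + ((-2453012480 : ℂ) * E ^ 2 * F ^ 2 * B ^ 20 * C ^ 4 + ((-2065694720 : ℂ) * E ^ 2 * F ^ 2 * B ^ 20 * C ^ 28 + (-10328473600 : ℂ) * E ^ 2 * F ^ 2 * B ^ 32 * C ^ 16))))) + (((((-1032847360 : ℂ) * E ^ 2 * F ^ 2 * B ^ 44 * C ^ 4 + ((2809430016 : ℂ) * E ^ 2 * F ^ 4 * B ^ 4 + (50331648 : ℂ) * E ^ 2 * F ^ 4 * B ^ 4 * C ^ 24)) + ((283115520 : ℂ) * E ^ 2 * F ^ 4 * B ^ 8 * C ^ 4 + ((301989888 : ℂ) * E ^ 2 * F ^ 4 * B ^ 8 * C ^ 28 + (-905969664 : ℂ) * E ^ 2 * F ^ 4 * B ^ 16 * C ^ 12))) + (((5105811456 : ℂ) * E ^ 2 * F ^ 4 * B ^ 20 * C ^ 16 + ((-704643072 : ℂ) * E ^ 2 * F ^ 4 * B ^ 28 + (2703900672 : ℂ) * E ^ 2 * F ^ 4 * B ^ 32 * C ^ 4)) + ((-311427072 : ℂ) * E ^ 2 * F ^ 6 * B ^ 4 * C ^ 12 + ((-891813888 : ℂ)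 * E ^ 2 * F ^ 6 * B ^ 8 * C ^ 16 + (848822272 : ℂ) * E ^ 2 * F ^ 6 * B ^ 16)))) + ((((-1528823808 : ℂ) * E ^ 2 * F ^ 6 * B ^ 20 * C ^ 4 + ((-254803968 : ℂ) * E ^ 2 * F ^ 6 * B ^ 32 * C ^ 16 + (267321344 : ℂ) * E ^ 2 * F ^ 8 * B ^ 4)) + ((334430208 : ℂ) * E ^ 2 * F ^ 8 * B ^ 8 * C ^ 4 + ((129105920 : ℂ) * E ^ 2 * F ^ 8 * B ^ 20 * C ^ 16 + (64552960 : ℂ) * E ^ 2 * F ^ 8 * B ^ 32 * C ^ 4))) + (((-15728640 : ℂ) * E ^ 2 * F ^ 10 * B ^ 4 * C ^ 12 + ((-18874368 : ℂ) * E ^ 2 * F ^ 10 * B ^ 8 * C ^ 16 + (3145728 : ℂ) * E ^ 2 * F ^ 10 * B ^ 16)) + ((-37748736 : ℂ) * E ^ 2 * F ^ 10 * B ^ 20 * C ^ 4 + ((28311552 : ℂ) * E ^ 2 * F ^ 12 * B ^ 4 + (15925248 : ℂ) * E ^ 2 * F ^ 12 * B ^ 8 * C ^ 4)))))) + ((((((786432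 : ℂ) * E ^ 2 * F ^ 16 * B ^ 4 + ((2504523776 : ℂ) * E ^ 3 * F * B ^ 4 + (1132462080 : ℂ) * E ^ 3 * F * B ^ 4 * C ^ 24)) + ((637009920 : ℂ) * E ^ 3 * F * B ^ 8 * C ^ 4 + ((679477248 : ℂ) * E ^ 3 * F * B ^ 8 * C ^ 28 + (-11265900544 : ℂ) * E ^ 3 * F * B ^ 16 * C ^ 12))) + (((7671382016 : ℂ) * E ^ 3 * F * B ^ 20 * C ^ 16 + ((-6440353792 : ℂ) * E ^ 3 * F * B ^ 28 + (4175429632 : ℂ) * E ^ 3 * F * B ^ 32 * C ^ 4)) + ((4076863488 : ℂ) * E ^ 3 * F * B ^ 32 * C ^ 28 + ((4076863488 : ℂ) * E ^ 3 * F * B ^ 44 * C ^ 16 + (-3937730560 : ℂ) * E ^ 3 * F ^ 3 * B ^ 4 * C ^ 12)))) + ((((-1226506240 : ℂ) * E ^ 3 * F ^ 3 * B ^ 8 * C ^ 16 + ((4518707200 : ℂ) * E ^ 3 * F ^ 3 * B ^ 16 + (-2453012480 : ℂ) * E ^ 3 * F ^ 3 * B ^ 20 * C ^ 4)) + ((-2065694720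 : ℂ) * E ^ 3 * F ^ 3 * B ^ 20 * C ^ 28 + ((-10328473600 : ℂ) * E ^ 3 * F ^ 3 * B ^ 32 * C ^ 16 + (-1032847360 : ℂ) * E ^ 3 * F ^ 3 * B ^ 44 * C ^ 4))) + (((2809430016 : ℂ) * E ^ 3 * F ^ 5 * B ^ 4 + ((50331648 : ℂ) * E ^ 3 * F ^ 5 * B ^ 4 * C ^ 24 + (283115520 : ℂ) * E ^ 3 * F ^ 5 * B ^ 8 * C ^ 4)) + ((301989888 : ℂ) * E ^ 3 * F ^ 5 * B ^ 8 * C ^ 28 + ((-905969664 : ℂ) * E ^ 3 * F ^ 5 * B ^ 16 * C ^ 12 + (5105811456 : ℂ) * E ^ 3 * F ^ 5 * B ^ 20 * C ^ 16))))) + (((((-704643072 : ℂ) * E ^ 3 * F ^ 5 * B ^ 28 + ((2703900672 : ℂ) * E ^ 3 * F ^ 5 * B ^ 32 * C ^ 4 + (-311427072 : ℂ) * E ^ 3 * F ^ 7 * B ^ 4 * C ^ 12)) + ((-891813888 : ℂ) * E ^ 3 * F ^ 7 * B ^ 8 * C ^ 16 + ((848822272 : ℂ) * E ^ 3 * F ^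 7 * B ^ 16 + (-1528823808 : ℂ) * E ^ 3 * F ^ 7 * B ^ 20 * C ^ 4))) + (((-254803968 : ℂ) * E ^ 3 * F ^ 7 * B ^ 32 * C ^ 16 + ((267321344 : ℂ) * E ^ 3 * F ^ 9 * B ^ 4 + (334430208 : ℂ) * E ^ 3 * F ^ 9 * B ^ 8 * C ^ 4)) + ((129105920 : ℂ) * E ^ 3 * F ^ 9 * B ^ 20 * C ^ 16 + ((64552960 : ℂ) * E ^ 3 * F ^ 9 * B ^ 32 * C ^ 4 + (-15728640 : ℂ) * E ^ 3 * F ^ 11 * B ^ 4 * C ^ 12)))) + ((((-18874368 : ℂ) * E ^ 3 * F ^ 11 * B ^ 8 * C ^ 16 + ((3145728 : ℂ) * E ^ 3 * F ^ 11 * B ^ 16 + (-37748736 : ℂ) * E ^ 3 * F ^ 11 * B ^ 20 * C ^ 4)) + ((28311552 : ℂ) * E ^ 3 * F ^ 13 * B ^ 4 + ((15925248 : ℂ) * E ^ 3 * F ^ 13 * B ^ 8 * C ^ 4 + (786432 : ℂ) * E ^ 3 * F ^ 17 * B ^ 4))) + (((-1233125376 : ℂ) * E ^ 4 * B ^ 4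 * C ^ 12 + ((-1585446912 : ℂ) * E ^ 4 * B ^ 8 * C ^ 16 + (8299020288 : ℂ) * E ^ 4 * B ^ 16)) + (((603979776 : ℂ) * E ^ 4 * B ^ 16 * C ^ 24 + (-2717908992 : ℂ) * E ^ 4 * B ^ 20 * C ^ 4) + ((-2415919104 : ℂ) * E ^ 4 * B ^ 20 * C ^ 28 + (805306368 : ℂ) * E ^ 4 * B ^ 28 * C ^ 12)))))))) + ((((((((-12023562240 : ℂ) * E ^ 4 * B ^ 32 * C ^ 16 + ((201326592 : ℂ) * E ^ 4 * B ^ 40 + (-1207959552 : ℂ) * E ^ 4 * B ^ 44 * C ^ 4)) + ((2504523776 : ℂ) * E ^ 4 * F ^ 2 * B ^ 4 + ((113246208 : ℂ) * E ^ 4 * F ^ 2 * B ^ 4 * C ^ 24 + (637009920 : ℂ) * E ^ 4 * F ^ 2 * B ^ 8 * C ^ 4))) + (((679477248 : ℂ) * E ^ 4 * F ^ 2 * B ^ 8 * C ^ 28 + ((-2038431744 : ℂ) * E ^ 4 * F ^ 2 * B ^ 16 * C ^ 12 + (7671382016 : ℂ) * E ^ 4 * F ^ 2 * B ^ 20 *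 C ^ 16)) + ((-1585446912 : ℂ) * E ^ 4 * F ^ 2 * B ^ 28 + ((4175429632 : ℂ) * E ^ 4 * F ^ 2 * B ^ 32 * C ^ 4 + (129105920 : ℂ) * E ^ 4 * F ^ 4 * B ^ 4 * C ^ 12)))) + ((((-1226506240 : ℂ) * E ^ 4 * F ^ 4 * B ^ 8 * C ^ 16 + ((2485288960 : ℂ) * E ^ 4 * F ^ 4 * B ^ 16 + (-2453012480 : ℂ) * E ^ 4 * F ^ 4 * B ^ 20 * C ^ 4)) + ((-258211840 : ℂ) * E ^ 4 * F ^ 4 * B ^ 32 * C ^ 16 + ((-131764224 : ℂ) * E ^ 4 * F ^ 6 * B ^ 4 + (283115520 : ℂ) * E ^ 4 * F ^ 6 * B ^ 8 * C ^ 4))) + (((-201326592 : ℂ) * E ^ 4 * F ^ 6 * B ^ 16 * C ^ 12 + ((226492416 : ℂ) * E ^ 4 * F ^ 6 * B ^ 20 * C ^ 16 + (-176160768 : ℂ) * E ^ 4 * F ^ 6 * B ^ 28)) + ((113246208 : ℂ) * E ^ 4 * F ^ 6 * B ^ 32 * C ^ 4 + ((70778880 : ℂ) * E ^ 4 * F ^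 8 * B ^ 4 * C ^ 12 + (-63700992 : ℂ) * E ^ 4 * F ^ 8 * B ^ 8 * C ^ 16))))) + (((((325582848 : ℂ) * E ^ 4 * F ^ 8 * B ^ 16 + ((-127401984 : ℂ) * E ^ 4 * F ^ 8 * B ^ 20 * C ^ 4 + (-87162880 : ℂ) * E ^ 4 * F ^ 10 * B ^ 4)) + ((11943936 : ℂ) * E ^ 4 * F ^ 10 * B ^ 8 * C ^ 4 + ((7864320 : ℂ) * E ^ 4 * F ^ 12 * B ^ 16 + (-3538944 : ℂ) * E ^ 4 * F ^ 14 * B ^ 4))) + (((-1233125376 : ℂ) * E ^ 5 * F * B ^ 4 * C ^ 12 + ((-1585446912 : ℂ) * E ^ 5 * F * B ^ 8 * C ^ 16 + (8299020288 : ℂ) * E ^ 5 * F * B ^ 16)) + ((603979776 : ℂ) * E ^ 5 * F * B ^ 16 * C ^ 24 + ((-2717908992 : ℂ) * E ^ 5 * F * B ^ 20 * C ^ 4 + (-2415919104 : ℂ) * E ^ 5 * F * B ^ 20 * C ^ 28)))) + ((((805306368 : ℂ) * E ^ 5 * F * B ^ 28 * C ^ 12 + ((-12023562240 : ℂ) *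 E ^ 5 * F * B ^ 32 * C ^ 16 + (201326592 : ℂ) * E ^ 5 * F * B ^ 40)) + ((-1207959552 : ℂ) * E ^ 5 * F * B ^ 44 * C ^ 4 + ((2504523776 : ℂ) * E ^ 5 * F ^ 3 * B ^ 4 + (113246208 : ℂ) * E ^ 5 * F ^ 3 * B ^ 4 * C ^ 24))) + (((637009920 : ℂ) * E ^ 5 * F ^ 3 * B ^ 8 * C ^ 4 + ((679477248 : ℂ) * E ^ 5 * F ^ 3 * B ^ 8 * C ^ 28 + (-2038431744 : ℂ) * E ^ 5 * F ^ 3 * B ^ 16 * C ^ 12)) + ((7671382016 : ℂ) * E ^ 5 * F ^ 3 * B ^ 20 * C ^ 16 + ((-1585446912 : ℂ) * E ^ 5 * F ^ 3 * B ^ 28 + (4175429632 : ℂ) * E ^ 5 * F ^ 3 * B ^ 32 * C ^ 4)))))) + ((((((129105920 : ℂ) * E ^ 5 * F ^ 5 * B ^ 4 * C ^ 12 + ((-1226506240 : ℂ) * E ^ 5 * F ^ 5 * B ^ 8 * C ^ 16 + (2485288960 : ℂ) * E ^ 5 * F ^ 5 * B ^ 16)) + ((-2453012480 : ℂ) * E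 ^ 5 * F ^ 5 * B ^ 20 * C ^ 4 + ((-258211840 : ℂ) * E ^ 5 * F ^ 5 * B ^ 32 * C ^ 16 + (-131764224 : ℂ) * E ^ 5 * F ^ 7 * B ^ 4))) + (((283115520 : ℂ) * E ^ 5 * F ^ 7 * B ^ 8 * C ^ 4 + ((-201326592 : ℂ) * E ^ 5 * F ^ 7 * B ^ 16 * C ^ 12 + (226492416 : ℂ) * E ^ 5 * F ^ 7 * B ^ 20 * C ^ 16)) + ((-176160768 : ℂ) * E ^ 5 * F ^ 7 * B ^ 28 + ((113246208 : ℂ) * E ^ 5 * F ^ 7 * B ^ 32 * C ^ 4 + (70778880 : ℂ) * E ^ 5 * F ^ 9 * B ^ 4 * C ^ 12)))) + ((((-63700992 : ℂ) * E ^ 5 * F ^ 9 * B ^ 8 * C ^ 16 + ((325582848 : ℂ) * E ^ 5 * F ^ 9 * B ^ 16 + (-127401984 : ℂ) * E ^ 5 * F ^ 9 * B ^ 20 * C ^ 4)) + ((-87162880 : ℂ) * E ^ 5 * F ^ 11 * B ^ 4 + ((11943936 : ℂ) * E ^ 5 * F ^ 11 * B ^ 8 * C ^ 4 + (7864320 :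 ℂ) * E ^ 5 * F ^ 13 * B ^ 16))) + (((-3538944 : ℂ) * E ^ 5 * F ^ 15 * B ^ 4 + ((-294649856 : ℂ) * E ^ 6 * B ^ 4 + (469762048 : ℂ) * E ^ 6 * B ^ 8 * C ^ 4)) + ((268435456 : ℂ) * E ^ 6 * B ^ 8 * C ^ 28 + ((-6652166144 : ℂ) * E ^ 6 * B ^ 16 * C ^ 12 + (7177502720 : ℂ) * E ^ 6 * B ^ 20 * C ^ 16))))) + (((((-5102895104 : ℂ) * E ^ 6 * B ^ 28 + ((3722969088 : ℂ) * E ^ 6 * B ^ 32 * C ^ 4 + (-553648128 : ℂ) * E ^ 6 * F ^ 2 * B ^ 4 * C ^ 12)) + ((-1585446912 : ℂ) * E ^ 6 * F ^ 2 * B ^ 8 * C ^ 16 + ((4901634048 : ℂ) * E ^ 6 * F ^ 2 * B ^ 16 + (-2717908992 : ℂ) * E ^ 6 * F ^ 2 * B ^ 20 * C ^ 4))) + (((-452984832 : ℂ) * E ^ 6 * F ^ 2 * B ^ 32 * C ^ 16 + ((180617216 : ℂ) * E ^ 6 * F ^ 4 * B ^ 4 + (637009920 : ℂ) * E ^ 6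 * F ^ 4 * B ^ 8 * C ^ 4)) + ((-452984832 : ℂ) * E ^ 6 * F ^ 4 * B ^ 16 * C ^ 12 + ((509607936 : ℂ) * E ^ 6 * F ^ 4 * B ^ 20 * C ^ 16 + (-396361728 : ℂ) * E ^ 6 * F ^ 4 * B ^ 28)))) + ((((254803968 : ℂ) * E ^ 6 * F ^ 4 * B ^ 32 * C ^ 4 + ((-64552960 : ℂ) * E ^ 6 * F ^ 6 * B ^ 8 * C ^ 16 + (710082560 : ℂ) * E ^ 6 * F ^ 6 * B ^ 16)) + ((-129105920 : ℂ) * E ^ 6 * F ^ 6 * B ^ 20 * C ^ 4 + ((-59768832 : ℂ) * E ^ 6 * F ^ 8 * B ^ 4 + (28311552 : ℂ) * E ^ 6 * F ^ 8 * B ^ 8 * C ^ 4))) + (((14155776 : ℂ) * E ^ 6 * F ^ 10 * B ^ 16 + ((-294649856 : ℂ) * E ^ 7 * F * B ^ 4 + (469762048 : ℂ) * E ^ 7 * F * B ^ 8 * C ^ 4)) + ((268435456 : ℂ) * E ^ 7 * F * B ^ 8 * C ^ 28 + ((-6652166144 : ℂ) * E ^ 7 * F * B ^ 16 * C ^ 12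 + (7177502720 : ℂ) * E ^ 7 * F * B ^ 20 * C ^ 16))))))) + (((((((-5102895104 : ℂ) * E ^ 7 * F * B ^ 28 + ((3722969088 : ℂ) * E ^ 7 * F * B ^ 32 * C ^ 4 + (-553648128 : ℂ) * E ^ 7 * F ^ 3 * B ^ 4 * C ^ 12)) + ((-1585446912 : ℂ) * E ^ 7 * F ^ 3 * B ^ 8 * C ^ 16 + ((4901634048 : ℂ) * E ^ 7 * F ^ 3 * B ^ 16 + (-2717908992 : ℂ) * E ^ 7 * F ^ 3 * B ^ 20 * C ^ 4))) + (((-452984832 : ℂ) * E ^ 7 * F ^ 3 * B ^ 32 * C ^ 16 + ((180617216 : ℂ) * E ^ 7 * F ^ 5 * B ^ 4 + (637009920 : ℂ) * E ^ 7 * F ^ 5 * B ^ 8 * C ^ 4)) + ((-452984832 : ℂ) * E ^ 7 * F ^ 5 * B ^ 16 * C ^ 12 + ((509607936 : ℂ) * E ^ 7 * F ^ 5 * B ^ 20 * C ^ 16 + (-396361728 : ℂ) * E ^ 7 * F ^ 5 * B ^ 28)))) + ((((254803968 : ℂ) * E ^ 7 * F ^ 5 * B ^ 32 * C ^ 4 +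 ((-64552960 : ℂ) * E ^ 7 * F ^ 7 * B ^ 8 * C ^ 16 + (710082560 : ℂ) * E ^ 7 * F ^ 7 * B ^ 16)) + ((-129105920 : ℂ) * E ^ 7 * F ^ 7 * B ^ 20 * C ^ 4 + ((-59768832 : ℂ) * E ^ 7 * F ^ 9 * B ^ 4 + (28311552 : ℂ) * E ^ 7 * F ^ 9 * B ^ 8 * C ^ 4))) + (((14155776 : ℂ) * E ^ 7 * F ^ 11 * B ^ 16 + ((1387266048 : ℂ) * E ^ 8 * B ^ 4 * C ^ 12 + (-1202716672 : ℂ) * E ^ 8 * B ^ 8 * C ^ 16)) + ((6264193024 : ℂ) * E ^ 8 * B ^ 16 + ((-2405433344 : ℂ) * E ^ 8 * B ^ 20 * C ^ 4 + (-1019215872 : ℂ) * E ^ 8 * B ^ 32 * C ^ 16))))) + (((((-294649856 : ℂ) * E ^ 8 * F ^ 2 * B ^ 4 + ((469762048 : ℂ) * E ^ 8 * F ^ 2 * B ^ 8 * C ^ 4 + (516423680 : ℂ) * E ^ 8 * F ^ 2 * B ^ 20 * C ^ 16)) + ((258211840 : ℂ) * E ^ 8 * F ^ 2 * B ^ 32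 * C ^ 4 + ((125829120 : ℂ) * E ^ 8 * F ^ 4 * B ^ 4 * C ^ 12 + (-113246208 : ℂ) * E ^ 8 * F ^ 4 * B ^ 8 * C ^ 16))) + (((578813952 : ℂ) * E ^ 8 * F ^ 4 * B ^ 16 + ((-226492416 : ℂ) * E ^ 8 * F ^ 4 * B ^ 20 * C ^ 4 + (-134479872 : ℂ) * E ^ 8 * F ^ 6 * B ^ 4)) + ((63700992 : ℂ) * E ^ 8 * F ^ 6 * B ^ 8 * C ^ 4 + ((-3145728 : ℂ) * E ^ 8 * F ^ 10 * B ^ 4 + (1387266048 : ℂ) * E ^ 9 * F * B ^ 4 * C ^ 12)))) + ((((-1202716672 : ℂ) * E ^ 9 * F * B ^ 8 * C ^ 16 + ((6264193024 : ℂ) * E ^ 9 * F * B ^ 16 + (-2405433344 : ℂ) * E ^ 9 * F * B ^ 20 * C ^ 4)) + ((-1019215872 : ℂ) * E ^ 9 * F * B ^ 32 * C ^ 16 + ((-294649856 : ℂ) * E ^ 9 * F ^ 3 * B ^ 4 + (469762048 : ℂ) * E ^ 9 * F ^ 3 * B ^ 8 * C ^ 4))) + (((516423680 : ℂ) * E ^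 9 * F ^ 3 * B ^ 20 * C ^ 16 + ((258211840 : ℂ) * E ^ 9 * F ^ 3 * B ^ 32 * C ^ 4 + (125829120 : ℂ) * E ^ 9 * F ^ 5 * B ^ 4 * C ^ 12)) + ((-113246208 : ℂ) * E ^ 9 * F ^ 5 * B ^ 8 * C ^ 16 + ((578813952 : ℂ) * E ^ 9 * F ^ 5 * B ^ 16 + (-226492416 : ℂ) * E ^ 9 * F ^ 5 * B ^ 20 * C ^ 4)))))) + ((((((-134479872 : ℂ) * E ^ 9 * F ^ 7 * B ^ 4 + ((63700992 : ℂ) * E ^ 9 * F ^ 7 * B ^ 8 * C ^ 4 + (-3145728 : ℂ) * E ^ 9 * F ^ 11 * B ^ 4)) + ((-1157627904 : ℂ) * E ^ 10 * B ^ 4 + ((452984832 : ℂ) * E ^ 10 * B ^ 8 * C ^ 4 + (603979776 : ℂ) * E ^ 10 * B ^ 20 * C ^ 16))) + (((50331648 : ℂ) * E ^ 10 * B ^ 28 + ((301989888 : ℂ) * E ^ 10 * B ^ 32 * C ^ 4 + (-141557760 : ℂ) * E ^ 10 * F ^ 2 * B ^ 4 * C ^ 12)) + ((-169869312 : ℂ)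 * E ^ 10 * F ^ 2 * B ^ 8 * C ^ 16 + ((28311552 : ℂ) * E ^ 10 * F ^ 2 * B ^ 16 + (-339738624 : ℂ) * E ^ 10 * F ^ 2 * B ^ 20 * C ^ 4)))) + ((((-38666240 : ℂ) * E ^ 10 * F ^ 4 * B ^ 4 + ((16777216 : ℂ) * E ^ 10 * F ^ 4 * B ^ 8 * C ^ 4 + (25165824 : ℂ) * E ^ 10 * F ^ 6 * B ^ 16)) + ((-7077888 : ℂ) * E ^ 10 * F ^ 8 * B ^ 4 + ((-1157627904 : ℂ) * E ^ 11 * F * B ^ 4 + (452984832 : ℂ) * E ^ 11 * F * B ^ 8 * C ^ 4))) + (((603979776 : ℂ) * E ^ 11 * F * B ^ 20 * C ^ 16 + ((50331648 : ℂ) * E ^ 11 * F * B ^ 28 + (301989888 : ℂ) * E ^ 11 * F * B ^ 32 * C ^ 4)) + ((-141557760 : ℂ) * E ^ 11 * F ^ 3 * B ^ 4 * C ^ 12 + ((-169869312 : ℂ) * E ^ 11 * F ^ 3 * B ^ 8 * C ^ 16 + (28311552 : ℂ) * E ^ 11 * F ^ 3 * B ^ 16))))) + (((((-339738624 : ℂ)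 * E ^ 11 * F ^ 3 * B ^ 20 * C ^ 4 + ((-38666240 : ℂ) * E ^ 11 * F ^ 5 * B ^ 4 + (16777216 : ℂ) * E ^ 11 * F ^ 5 * B ^ 8 * C ^ 4)) + ((25165824 : ℂ) * E ^ 11 * F ^ 7 * B ^ 16 + ((-7077888 : ℂ) * E ^ 11 * F ^ 9 * B ^ 4 + (-67108864 : ℂ) * E ^ 12 * B ^ 8 * C ^ 16))) + (((630194176 : ℂ) * E ^ 12 * B ^ 16 + ((-134217728 : ℂ) * E ^ 12 * B ^ 20 * C ^ 4 + (201326592 : ℂ) * E ^ 12 * F ^ 2 * B ^ 4)) + ((113246208 : ℂ) * E ^ 12 * F ^ 2 * B ^ 8 * C ^ 4 + ((70778880 : ℂ) * E ^ 12 * F ^ 4 * B ^ 16 + (-67108864 : ℂ) * E ^ 13 * F * B ^ 8 * C ^ 16)))) + ((((630194176 : ℂ) * E ^ 13 * F * B ^ 16 + ((-134217728 : ℂ) * E ^ 13 * F * B ^ 20 * C ^ 4 + (201326592 : ℂ) * E ^ 13 * F ^ 3 * B ^ 4)) + ((113246208 : ℂ) * E ^ 13 * F ^ 3 * B ^ 8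 * C ^ 4 + ((70778880 : ℂ) * E ^ 13 * F ^ 5 * B ^ 16 + (-226492416 : ℂ) * E ^ 14 * B ^ 4))) + (((-25165824 : ℂ) * E ^ 14 * F ^ 4 * B ^ 4 + ((-226492416 : ℂ) * E ^ 15 * F * B ^ 4 + (-25165824 : ℂ) * E ^ 15 * F ^ 5 * B ^ 4)) + (((-25165824 : ℂ) * E ^ 16 * B ^ 16 + (28311552 : ℂ) * E ^ 16 * F ^ 2 * B ^ 4) + ((-25165824 : ℂ) * E ^ 17 * F * B ^ 16 + (28311552 : ℂ) * E ^ 17 * F ^ 3 * B ^ 4)))))))))) * hEF + (((((((((((0 : ℂ) * C ^ 8 + (0 : ℂ) * B * C ^ 9) + ((0 : ℂ) * B ^ 2 * C ^ 10 + (0 : ℂ) * B ^ 3 * C ^ 11)) + (((3937730560 : ℂ) * B ^ 4 * C ^ 12 + (3937730560 : ℂ) * B ^ 5 * C ^ 13) + ((3937730560 : ℂ) * B ^ 6 * C ^ 14 + ((3937730560 : ℂ) * B ^ 7 * C ^ 15 + (5164236800 : ℂ) * B ^ 8 * C ^ 16)))) + ((((5164236800 : ℂ) * B ^ 9 * C ^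 17 + (5164236800 : ℂ) * B ^ 10 * C ^ 18) + ((5164236800 : ℂ) * B ^ 11 * C ^ 19 + (5164236800 : ℂ) * B ^ 12 * C ^ 20)) + (((5164236800 : ℂ) * B ^ 13 * C ^ 21 + (5164236800 : ℂ) * B ^ 14 * C ^ 22) + ((5164236800 : ℂ) * B ^ 15 * C ^ 23 + ((-4518707200 : ℂ) * B ^ 16 + (-2065694720 : ℂ) * B ^ 16 * C ^ 24))))) + (((((-4518707200 : ℂ) * B ^ 17 * C + (-2065694720 : ℂ) * B ^ 17 * C ^ 25) + ((-4518707200 : ℂ) * B ^ 18 * C ^ 2 + (-2065694720 : ℂ) * B ^ 18 * C ^ 26)) + (((-4518707200 : ℂ) * B ^ 19 * C ^ 3 + (-2065694720 : ℂ) * B ^ 19 * C ^ 27) + ((-2065694720 : ℂ) * B ^ 20 * C ^ 4 + ((-2065694720 : ℂ) * B ^ 21 * C ^ 5 + (-2065694720 : ℂ) * B ^ 22 * C ^ 6)))) + ((((-2065694720 : ℂ) * B ^ 23 * C ^ 7 + (-2065694720 : ℂ) * B ^ 24 * C ^ 8) + ((-2065694720 : ℂ) * B ^ 25 * C ^ 9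 + ((-2065694720 : ℂ) * B ^ 26 * C ^ 10 + (-2065694720 : ℂ) * B ^ 27 * C ^ 11))) + (((-10328473600 : ℂ) * B ^ 28 * C ^ 12 + (-10328473600 : ℂ) * B ^ 29 * C ^ 13) + ((-10328473600 : ℂ) * B ^ 30 * C ^ 14 + ((-10328473600 : ℂ) * B ^ 31 * C ^ 15 + (-1032847360 : ℂ) * B ^ 40)))))) + ((((((-1032847360 : ℂ) * B ^ 41 * C + (-1032847360 : ℂ) * B ^ 42 * C ^ 2) + ((-1032847360 : ℂ) * B ^ 43 * C ^ 3 + (0 : ℂ) * F ^ 2 * C ^ 20)) + (((0 : ℂ) * F ^ 2 * B * C ^ 21 + (0 : ℂ) * F ^ 2 * B ^ 2 * C ^ 22) + ((0 : ℂ) * F ^ 2 * B ^ 3 * C ^ 23 + ((-2809430016 : ℂ) * F ^ 2 * B ^ 4 + (-503316480 : ℂ) * F ^ 2 * B ^ 4 * C ^ 24)))) + ((((-2809430016 : ℂ) * F ^ 2 * B ^ 5 * C + (-503316480 : ℂ) * F ^ 2 * B ^ 5 * C ^ 25) + ((-2809430016 : ℂ) * F ^ 2 * B ^ 6 * C ^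 2 + ((-503316480 : ℂ) * F ^ 2 * B ^ 6 * C ^ 26 + (-2809430016 : ℂ) * F ^ 2 * B ^ 7 * C ^ 3))) + (((-503316480 : ℂ) * F ^ 2 * B ^ 7 * C ^ 27 + (-3092545536 : ℂ) * F ^ 2 * B ^ 8 * C ^ 4) + ((-805306368 : ℂ) * F ^ 2 * B ^ 8 * C ^ 28 + ((-3092545536 : ℂ) * F ^ 2 * B ^ 9 * C ^ 5 + (-805306368 : ℂ) * F ^ 2 * B ^ 9 * C ^ 29))))) + (((((-3092545536 : ℂ) * F ^ 2 * B ^ 10 * C ^ 6 + (-805306368 : ℂ) * F ^ 2 * B ^ 10 * C ^ 30) + ((-3092545536 : ℂ) * F ^ 2 * B ^ 11 * C ^ 7 + (-805306368 : ℂ) * F ^ 2 * B ^ 11 * C ^ 31)) + (((-3092545536 : ℂ) * F ^ 2 * B ^ 12 * C ^ 8 + (-805306368 : ℂ) * F ^ 2 * B ^ 12 * C ^ 32) + ((-3092545536 : ℂ) * F ^ 2 * B ^ 13 * C ^ 9 + ((-805306368 : ℂ) * F ^ 2 * B ^ 13 * C ^ 33 + (-3092545536 : ℂ) * F ^ 2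 * B ^ 14 * C ^ 10)))) + ((((-805306368 : ℂ) * F ^ 2 * B ^ 14 * C ^ 34 + (-3092545536 : ℂ) * F ^ 2 * B ^ 15 * C ^ 11) + ((-805306368 : ℂ) * F ^ 2 * B ^ 15 * C ^ 35 + ((5307138048 : ℂ) * F ^ 2 * B ^ 16 * C ^ 12 + (5307138048 : ℂ) * F ^ 2 * B ^ 17 * C ^ 13))) + (((5307138048 : ℂ) * F ^ 2 * B ^ 18 * C ^ 14 + (5307138048 : ℂ) * F ^ 2 * B ^ 19 * C ^ 15) + ((201326592 : ℂ) * F ^ 2 * B ^ 20 * C ^ 16 + ((201326592 : ℂ) * F ^ 2 * B ^ 21 * C ^ 17 + (201326592 : ℂ) * F ^ 2 * B ^ 22 * C ^ 18))))))) + (((((((201326592 : ℂ) * F ^ 2 * B ^ 23 * C ^ 19 + (201326592 : ℂ) * F ^ 2 * B ^ 24 * C ^ 20) + ((201326592 : ℂ) * F ^ 2 * B ^ 25 * C ^ 21 + (201326592 : ℂ) * F ^ 2 * B ^ 26 * C ^ 22)) + (((201326592 : ℂ) * F ^ 2 * B ^ 27 * C ^ 23 + (3710533632 : ℂ) * F ^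 2 * B ^ 28) + ((1811939328 : ℂ) * F ^ 2 * B ^ 28 * C ^ 24 + ((3710533632 : ℂ) * F ^ 2 * B ^ 29 * C + (1811939328 : ℂ) * F ^ 2 * B ^ 29 * C ^ 25)))) + ((((3710533632 : ℂ) * F ^ 2 * B ^ 30 * C ^ 2 + (1811939328 : ℂ) * F ^ 2 * B ^ 30 * C ^ 26) + ((3710533632 : ℂ) * F ^ 2 * B ^ 31 * C ^ 3 + (1811939328 : ℂ) * F ^ 2 * B ^ 31 * C ^ 27)) + (((1006632960 : ℂ) * F ^ 2 * B ^ 32 * C ^ 4 + (1006632960 : ℂ) * F ^ 2 * B ^ 33 * C ^ 5) + ((1006632960 : ℂ) * F ^ 2 * B ^ 34 * C ^ 6 + ((1006632960 : ℂ) * F ^ 2 * B ^ 35 * C ^ 7 + (1006632960 : ℂ) * F ^ 2 * B ^ 36 * C ^ 8))))) + (((((1006632960 : ℂ) * F ^ 2 * B ^ 37 * C ^ 9 + (1006632960 : ℂ) * F ^ 2 * B ^ 38 * C ^ 10) + ((1006632960 : ℂ) * F ^ 2 * B ^ 39 * C ^ 11 + (1811939328 : ℂ) * F ^ 2 * B ^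 40 * C ^ 12)) + (((1811939328 : ℂ) * F ^ 2 * B ^ 41 * C ^ 13 + (1811939328 : ℂ) * F ^ 2 * B ^ 42 * C ^ 14) + ((1811939328 : ℂ) * F ^ 2 * B ^ 43 * C ^ 15 + ((0 : ℂ) * F ^ 4 * C ^ 8 + (0 : ℂ) * F ^ 4 * B * C ^ 9)))) + ((((0 : ℂ) * F ^ 4 * B ^ 2 * C ^ 10 + (0 : ℂ) * F ^ 4 * B ^ 3 * C ^ 11) + ((693633024 : ℂ) * F ^ 4 * B ^ 4 * C ^ 12 + ((693633024 : ℂ) * F ^ 4 * B ^ 5 * C ^ 13 + (693633024 : ℂ) * F ^ 4 * B ^ 6 * C ^ 14))) + (((693633024 : ℂ) * F ^ 4 * B ^ 7 * C ^ 15 + (1585446912 : ℂ) * F ^ 4 * B ^ 8 * C ^ 16) + ((1585446912 : ℂ) * F ^ 4 * B ^ 9 * C ^ 17 + ((1585446912 : ℂ) * F ^ 4 * B ^ 10 * C ^ 18 + (1585446912 : ℂ) * F ^ 4 * B ^ 11 * C ^ 19)))))) + ((((((1585446912 : ℂ) * F ^ 4 * B ^ 12 * C ^ 20 + (1585446912 :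 ℂ) * F ^ 4 * B ^ 13 * C ^ 21) + ((1585446912 : ℂ) * F ^ 4 * B ^ 14 * C ^ 22 + (1585446912 : ℂ) * F ^ 4 * B ^ 15 * C ^ 23)) + (((-2759852032 : ℂ) * F ^ 4 * B ^ 16 + (-1358954496 : ℂ) * F ^ 4 * B ^ 16 * C ^ 24) + ((-2759852032 : ℂ) * F ^ 4 * B ^ 17 * C + ((-1358954496 : ℂ) * F ^ 4 * B ^ 17 * C ^ 25 + (-2759852032 : ℂ) * F ^ 4 * B ^ 18 * C ^ 2)))) + ((((-1358954496 : ℂ) * F ^ 4 * B ^ 18 * C ^ 26 + (-2759852032 : ℂ) * F ^ 4 * B ^ 19 * C ^ 3) + ((-1358954496 : ℂ) * F ^ 4 * B ^ 19 * C ^ 27 + ((-1231028224 : ℂ) * F ^ 4 * B ^ 20 * C ^ 4 + (-1231028224 : ℂ) * F ^ 4 * B ^ 21 * C ^ 5))) + (((-1231028224 : ℂ) * F ^ 4 * B ^ 22 * C ^ 6 + (-1231028224 : ℂ) * F ^ 4 * B ^ 23 * C ^ 7) + ((-1231028224 : ℂ) * F ^ 4 * B ^ 24 * C ^ 8 + ((-1231028224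 : ℂ) * F ^ 4 * B ^ 25 * C ^ 9 + (-1231028224 : ℂ) * F ^ 4 * B ^ 26 * C ^ 10))))) + (((((-1231028224 : ℂ) * F ^ 4 * B ^ 27 * C ^ 11 + (-4854906880 : ℂ) * F ^ 4 * B ^ 28 * C ^ 12) + ((-4854906880 : ℂ) * F ^ 4 * B ^ 29 * C ^ 13 + (-4854906880 : ℂ) * F ^ 4 * B ^ 30 * C ^ 14)) + (((-4854906880 : ℂ) * F ^ 4 * B ^ 31 * C ^ 15 + (-679477248 : ℂ) * F ^ 4 * B ^ 40) + ((-679477248 : ℂ) * F ^ 4 * B ^ 41 * C + ((-679477248 : ℂ) * F ^ 4 * B ^ 42 * C ^ 2 + (-679477248 : ℂ) * F ^ 4 * B ^ 43 * C ^ 3)))) + ((((0 : ℂ) * F ^ 6 * C ^ 20 + (0 : ℂ) * F ^ 6 * B * C ^ 21) + ((0 : ℂ) * F ^ 6 * B ^ 2 * C ^ 22 + ((0 : ℂ) * F ^ 6 * B ^ 3 * C ^ 23 + (-267321344 : ℂ) * F ^ 6 * B ^ 4))) + (((191102976 : ℂ) * F ^ 6 * B ^ 4 * C ^ 24 + (-267321344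 : ℂ) * F ^ 6 * B ^ 5 * C) + ((191102976 : ℂ) * F ^ 6 * B ^ 5 * C ^ 25 + ((-267321344 : ℂ) * F ^ 6 * B ^ 6 * C ^ 2 + (191102976 : ℂ) * F ^ 6 * B ^ 6 * C ^ 26)))))))) + ((((((((-267321344 : ℂ) * F ^ 6 * B ^ 7 * C ^ 3 + (191102976 : ℂ) * F ^ 6 * B ^ 7 * C ^ 27) + ((-601751552 : ℂ) * F ^ 6 * B ^ 8 * C ^ 4 + (-601751552 : ℂ) * F ^ 6 * B ^ 9 * C ^ 5)) + (((-601751552 : ℂ) * F ^ 6 * B ^ 10 * C ^ 6 + (-601751552 : ℂ) * F ^ 6 * B ^ 11 * C ^ 7) + ((-601751552 : ℂ) * F ^ 6 * B ^ 12 * C ^ 8 + ((-601751552 : ℂ) * F ^ 6 * B ^ 13 * C ^ 9 + (-601751552 : ℂ) * F ^ 6 * B ^ 14 * C ^ 10)))) + ((((-601751552 : ℂ) * F ^ 6 * B ^ 15 * C ^ 11 + (2992766976 : ℂ) * F ^ 6 * B ^ 16 * C ^ 12) + ((2992766976 : ℂ) * F ^ 6 * B ^ 17 * C ^ 13 + (2992766976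 : ℂ) * F ^ 6 * B ^ 18 * C ^ 14)) + (((2992766976 : ℂ) * F ^ 6 * B ^ 19 * C ^ 15 + (268435456 : ℂ) * F ^ 6 * B ^ 20 * C ^ 16) + ((268435456 : ℂ) * F ^ 6 * B ^ 21 * C ^ 17 + ((268435456 : ℂ) * F ^ 6 * B ^ 22 * C ^ 18 + (268435456 : ℂ) * F ^ 6 * B ^ 23 * C ^ 19))))) + (((((268435456 : ℂ) * F ^ 6 * B ^ 24 * C ^ 20 + (268435456 : ℂ) * F ^ 6 * B ^ 25 * C ^ 21) + ((268435456 : ℂ) * F ^ 6 * B ^ 26 * C ^ 22 + (268435456 : ℂ) * F ^ 6 * B ^ 27 * C ^ 23)) + (((1726152704 : ℂ) * F ^ 6 * B ^ 28 + (268435456 : ℂ) * F ^ 6 * B ^ 28 * C ^ 24) + ((1726152704 : ℂ) * F ^ 6 * B ^ 29 * C + ((268435456 : ℂ) * F ^ 6 * B ^ 29 * C ^ 25 + (1726152704 : ℂ) * F ^ 6 * B ^ 30 * C ^ 2)))) + ((((268435456 : ℂ) * F ^ 6 * B ^ 30 * C ^ 26 + (1726152704 : ℂ) * F ^ 6 *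 B ^ 31 * C ^ 3) + ((268435456 : ℂ) * F ^ 6 * B ^ 31 * C ^ 27 + ((268435456 : ℂ) * F ^ 6 * B ^ 32 * C ^ 4 + (268435456 : ℂ) * F ^ 6 * B ^ 33 * C ^ 5))) + (((268435456 : ℂ) * F ^ 6 * B ^ 34 * C ^ 6 + (268435456 : ℂ) * F ^ 6 * B ^ 35 * C ^ 7) + ((268435456 : ℂ) * F ^ 6 * B ^ 36 * C ^ 8 + ((268435456 : ℂ) * F ^ 6 * B ^ 37 * C ^ 9 + (268435456 : ℂ) * F ^ 6 * B ^ 38 * C ^ 10)))))) + ((((((268435456 : ℂ) * F ^ 6 * B ^ 39 * C ^ 11 + (268435456 : ℂ) * F ^ 6 * B ^ 40 * C ^ 12) + ((268435456 : ℂ) * F ^ 6 * B ^ 41 * C ^ 13 + (268435456 : ℂ) * F ^ 6 * B ^ 42 * C ^ 14)) + (((268435456 : ℂ) * F ^ 6 * B ^ 43 * C ^ 15 + (0 : ℂ) * F ^ 8 * C ^ 8) + ((0 : ℂ) * F ^ 8 * B * C ^ 9 + ((0 : ℂ) * F ^ 8 * B ^ 2 * C ^ 10 + (0 : ℂ) *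 F ^ 8 * B ^ 3 * C ^ 11)))) + ((((-396005376 : ℂ) * F ^ 8 * B ^ 4 * C ^ 12 + (-396005376 : ℂ) * F ^ 8 * B ^ 5 * C ^ 13) + ((-396005376 : ℂ) * F ^ 8 * B ^ 6 * C ^ 14 + ((-396005376 : ℂ) * F ^ 8 * B ^ 7 * C ^ 15 + (-50331648 : ℂ) * F ^ 8 * B ^ 8 * C ^ 16))) + (((-50331648 : ℂ) * F ^ 8 * B ^ 9 * C ^ 17 + (-50331648 : ℂ) * F ^ 8 * B ^ 10 * C ^ 18) + ((-50331648 : ℂ) * F ^ 8 * B ^ 11 * C ^ 19 + ((-50331648 : ℂ) * F ^ 8 * B ^ 12 * C ^ 20 + (-50331648 : ℂ) * F ^ 8 * B ^ 13 * C ^ 21))))) + (((((-50331648 : ℂ) * F ^ 8 * B ^ 14 * C ^ 22 + (-50331648 : ℂ) * F ^ 8 * B ^ 15 * C ^ 23) + ((-1194663936 : ℂ) * F ^ 8 * B ^ 16 + (-301989888 : ℂ) * F ^ 8 * B ^ 16 * C ^ 24)) + (((-1194663936 : ℂ) * F ^ 8 * B ^ 17 * C + (-301989888 : ℂ) * F ^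 8 * B ^ 17 * C ^ 25) + ((-1194663936 : ℂ) * F ^ 8 * B ^ 18 * C ^ 2 + ((-301989888 : ℂ) * F ^ 8 * B ^ 18 * C ^ 26 + (-1194663936 : ℂ) * F ^ 8 * B ^ 19 * C ^ 3)))) + ((((-301989888 : ℂ) * F ^ 8 * B ^ 19 * C ^ 27 + (-503316480 : ℂ) * F ^ 8 * B ^ 20 * C ^ 4) + ((-503316480 : ℂ) * F ^ 8 * B ^ 21 * C ^ 5 + ((-503316480 : ℂ) * F ^ 8 * B ^ 22 * C ^ 6 + (-503316480 : ℂ) * F ^ 8 * B ^ 23 * C ^ 7))) + (((-503316480 : ℂ) * F ^ 8 * B ^ 24 * C ^ 8 + (-503316480 : ℂ) * F ^ 8 * B ^ 25 * C ^ 9) + ((-503316480 : ℂ) * F ^ 8 * B ^ 26 * C ^ 10 + ((-503316480 : ℂ) * F ^ 8 * B ^ 27 * C ^ 11 + (-905969664 : ℂ) * F ^ 8 * B ^ 28 * C ^ 12))))))) + (((((((-905969664 : ℂ) * F ^ 8 * B ^ 29 * C ^ 13 + (-905969664 : ℂ) * F ^ 8 * B ^ 30 * C ^ 14) + ((-905969664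 : ℂ) * F ^ 8 * B ^ 31 * C ^ 15 + (-150994944 : ℂ) * F ^ 8 * B ^ 40)) + (((-150994944 : ℂ) * F ^ 8 * B ^ 41 * C + (-150994944 : ℂ) * F ^ 8 * B ^ 42 * C ^ 2) + ((-150994944 : ℂ) * F ^ 8 * B ^ 43 * C ^ 3 + ((0 : ℂ) * F ^ 10 * C ^ 20 + (0 : ℂ) * F ^ 10 * B * C ^ 21)))) + ((((0 : ℂ) * F ^ 10 * B ^ 2 * C ^ 22 + (0 : ℂ) * F ^ 10 * B ^ 3 * C ^ 23) + ((162791424 : ℂ) * F ^ 10 * B ^ 4 + (84934656 : ℂ) * F ^ 10 * B ^ 4 * C ^ 24)) + (((162791424 : ℂ) * F ^ 10 * B ^ 5 * C + (84934656 : ℂ) * F ^ 10 * B ^ 5 * C ^ 25) + ((162791424 : ℂ) * F ^ 10 * B ^ 6 * C ^ 2 + ((84934656 : ℂ) * F ^ 10 * B ^ 6 * C ^ 26 + (162791424 : ℂ) * F ^ 10 * B ^ 7 * C ^ 3))))) + (((((84934656 : ℂ) * F ^ 10 * B ^ 7 * C ^ 27 + (99090432 : ℂ) * F ^ 10 * B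 ^ 8 * C ^ 4) + ((99090432 : ℂ) * F ^ 10 * B ^ 9 * C ^ 5 + (99090432 : ℂ) * F ^ 10 * B ^ 10 * C ^ 6)) + (((99090432 : ℂ) * F ^ 10 * B ^ 11 * C ^ 7 + (99090432 : ℂ) * F ^ 10 * B ^ 12 * C ^ 8) + ((99090432 : ℂ) * F ^ 10 * B ^ 13 * C ^ 9 + ((99090432 : ℂ) * F ^ 10 * B ^ 14 * C ^ 10 + (99090432 : ℂ) * F ^ 10 * B ^ 15 * C ^ 11)))) + ((((721944576 : ℂ) * F ^ 10 * B ^ 16 * C ^ 12 + (721944576 : ℂ) * F ^ 10 * B ^ 17 * C ^ 13) + ((721944576 : ℂ) * F ^ 10 * B ^ 18 * C ^ 14 + ((721944576 : ℂ) * F ^ 10 * B ^ 19 * C ^ 15 + (403439616 : ℂ) * F ^ 10 * B ^ 28))) + (((403439616 : ℂ) * F ^ 10 * B ^ 29 * C + (403439616 : ℂ) * F ^ 10 * B ^ 30 * C ^ 2) + ((403439616 : ℂ) * F ^ 10 * B ^ 31 * C ^ 3 + ((0 : ℂ) * F ^ 12 * C ^ 8 + (0 : ℂ) * F ^ 12 *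 B * C ^ 9)))))) + ((((((0 : ℂ) * F ^ 12 * B ^ 2 * C ^ 10 + (0 : ℂ) * F ^ 12 * B ^ 3 * C ^ 11) + ((-167215104 : ℂ) * F ^ 12 * B ^ 4 * C ^ 12 + (-167215104 : ℂ) * F ^ 12 * B ^ 5 * C ^ 13)) + (((-167215104 : ℂ) * F ^ 12 * B ^ 6 * C ^ 14 + (-167215104 : ℂ) * F ^ 12 * B ^ 7 * C ^ 15) + ((-303431680 : ℂ) * F ^ 12 * B ^ 16 + ((-303431680 : ℂ) * F ^ 12 * B ^ 17 * C + (-303431680 : ℂ) * F ^ 12 * B ^ 18 * C ^ 2)))) + ((((-303431680 : ℂ) * F ^ 12 * B ^ 19 * C ^ 3 + (-16777216 : ℂ) * F ^ 12 * B ^ 20 * C ^ 4) + ((-16777216 : ℂ) * F ^ 12 * B ^ 21 * C ^ 5 + ((-16777216 : ℂ) * F ^ 12 * B ^ 22 * C ^ 6 + (-16777216 : ℂ) * F ^ 12 * B ^ 23 * C ^ 7))) + (((-16777216 : ℂ) * F ^ 12 * B ^ 24 * C ^ 8 + (-16777216 : ℂ) * F ^ 12 * B ^ 25 * C ^ 9)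 + ((-16777216 : ℂ) * F ^ 12 * B ^ 26 * C ^ 10 + ((-16777216 : ℂ) * F ^ 12 * B ^ 27 * C ^ 11 + (-16777216 : ℂ) * F ^ 12 * B ^ 28 * C ^ 12))))) + (((((-16777216 : ℂ) * F ^ 12 * B ^ 29 * C ^ 13 + (-16777216 : ℂ) * F ^ 12 * B ^ 30 * C ^ 14) + ((-16777216 : ℂ) * F ^ 12 * B ^ 31 * C ^ 15 + (66757632 : ℂ) * F ^ 14 * B ^ 4)) + (((66757632 : ℂ) * F ^ 14 * B ^ 5 * C + (66757632 : ℂ) * F ^ 14 * B ^ 6 * C ^ 2) + ((66757632 : ℂ) * F ^ 14 * B ^ 7 * C ^ 3 + ((6291456 : ℂ) * F ^ 14 * B ^ 8 * C ^ 4 + (6291456 : ℂ) * F ^ 14 * B ^ 9 * C ^ 5)))) + ((((6291456 : ℂ) * F ^ 14 * B ^ 10 * C ^ 6 + (6291456 : ℂ) * F ^ 14 * B ^ 11 * C ^ 7) + ((6291456 : ℂ) * F ^ 14 * B ^ 12 * C ^ 8 + ((6291456 : ℂ) * F ^ 14 * B ^ 13 * C ^ 9 + (6291456 : ℂ) * F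 ^ 14 * B ^ 14 * C ^ 10))) + (((6291456 : ℂ) * F ^ 14 * B ^ 15 * C ^ 11 + (18874368 : ℂ) * F ^ 14 * B ^ 16 * C ^ 12) + ((18874368 : ℂ) * F ^ 14 * B ^ 17 * C ^ 13 + ((18874368 : ℂ) * F ^ 14 * B ^ 18 * C ^ 14 + (18874368 : ℂ) * F ^ 14 * B ^ 19 * C ^ 15))))))))) + (((((((((9437184 : ℂ) * F ^ 14 * B ^ 28 + (9437184 : ℂ) * F ^ 14 * B ^ 29 * C) + ((9437184 : ℂ) * F ^ 14 * B ^ 30 * C ^ 2 + (9437184 : ℂ) * F ^ 14 * B ^ 31 * C ^ 3)) + (((0 : ℂ) * F ^ 16 * C ^ 8 + (0 : ℂ) * F ^ 16 * B * C ^ 9) + ((0 : ℂ) * F ^ 16 * B ^ 2 * C ^ 10 + ((0 : ℂ) * F ^ 16 * B ^ 3 * C ^ 11 + (-5308416 : ℂ) * F ^ 16 * B ^ 4 * C ^ 12)))) + ((((-5308416 : ℂ) * F ^ 16 * B ^ 5 * C ^ 13 + (-5308416 : ℂ) * F ^ 16 * B ^ 6 * C ^ 14) + ((-5308416 : ℂ)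 * F ^ 16 * B ^ 7 * C ^ 15 + (-10616832 : ℂ) * F ^ 16 * B ^ 16)) + (((-10616832 : ℂ) * F ^ 16 * B ^ 17 * C + (-10616832 : ℂ) * F ^ 16 * B ^ 18 * C ^ 2) + ((-10616832 : ℂ) * F ^ 16 * B ^ 19 * C ^ 3 + ((2985984 : ℂ) * F ^ 18 * B ^ 4 + (2985984 : ℂ) * F ^ 18 * B ^ 5 * C))))) + (((((2985984 : ℂ) * F ^ 18 * B ^ 6 * C ^ 2 + (2985984 : ℂ) * F ^ 18 * B ^ 7 * C ^ 3) + ((0 : ℂ) * E ^ 2 * C ^ 20 + (0 : ℂ) * E ^ 2 * B * C ^ 21)) + (((0 : ℂ) * E ^ 2 * B ^ 2 * C ^ 22 + (0 : ℂ) * E ^ 2 * B ^ 3 * C ^ 23) + ((-2504523776 : ℂ) * E ^ 2 * B ^ 4 + ((-1132462080 : ℂ) * E ^ 2 * B ^ 4 * C ^ 24 + (-2504523776 : ℂ) * E ^ 2 * B ^ 5 * C)))) + ((((-1132462080 : ℂ) * E ^ 2 * B ^ 5 * C ^ 25 + (-2504523776 : ℂ) * E ^ 2 * B ^ 6 * C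 ^ 2) + ((-1132462080 : ℂ) * E ^ 2 * B ^ 6 * C ^ 26 + ((-2504523776 : ℂ) * E ^ 2 * B ^ 7 * C ^ 3 + (-1132462080 : ℂ) * E ^ 2 * B ^ 7 * C ^ 27))) + (((-3141533696 : ℂ) * E ^ 2 * B ^ 8 * C ^ 4 + (-1811939328 : ℂ) * E ^ 2 * B ^ 8 * C ^ 28) + ((-3141533696 : ℂ) * E ^ 2 * B ^ 9 * C ^ 5 + ((-1811939328 : ℂ) * E ^ 2 * B ^ 9 * C ^ 29 + (-3141533696 : ℂ) * E ^ 2 * B ^ 10 * C ^ 6)))))) + ((((((-1811939328 : ℂ) * E ^ 2 * B ^ 10 * C ^ 30 + (-3141533696 : ℂ) * E ^ 2 * B ^ 11 * C ^ 7) + ((-1811939328 : ℂ) * E ^ 2 * B ^ 11 * C ^ 31 + (-3141533696 : ℂ) * E ^ 2 * B ^ 12 * C ^ 8)) + (((-1811939328 : ℂ) * E ^ 2 * B ^ 12 * C ^ 32 + (-3141533696 : ℂ) * E ^ 2 * B ^ 13 * C ^ 9) + ((-1811939328 : ℂ) * E ^ 2 * B ^ 13 * C ^ 33 + ((-3141533696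 : ℂ) * E ^ 2 * B ^ 14 * C ^ 10 + (-1811939328 : ℂ) * E ^ 2 * B ^ 14 * C ^ 34)))) + ((((-3141533696 : ℂ) * E ^ 2 * B ^ 15 * C ^ 11 + (-1811939328 : ℂ) * E ^ 2 * B ^ 15 * C ^ 35) + ((8124366848 : ℂ) * E ^ 2 * B ^ 16 * C ^ 12 + ((8124366848 : ℂ) * E ^ 2 * B ^ 17 * C ^ 13 + (8124366848 : ℂ) * E ^ 2 * B ^ 18 * C ^ 14))) + (((8124366848 : ℂ) * E ^ 2 * B ^ 19 * C ^ 15 + (452984832 : ℂ) * E ^ 2 * B ^ 20 * C ^ 16) + ((452984832 : ℂ) * E ^ 2 * B ^ 21 * C ^ 17 + ((452984832 : ℂ) * E ^ 2 * B ^ 22 * C ^ 18 + (452984832 : ℂ) * E ^ 2 * B ^ 23 * C ^ 19))))) + (((((452984832 : ℂ) * E ^ 2 * B ^ 24 * C ^ 20 + (452984832 : ℂ) * E ^ 2 * B ^ 25 * C ^ 21) + ((452984832 : ℂ) * E ^ 2 * B ^ 26 * C ^ 22 + (452984832 : ℂ) * E ^ 2 * B ^ 27 * C ^ 23)) + (((6440353792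 : ℂ) * E ^ 2 * B ^ 28 + (4076863488 : ℂ) * E ^ 2 * B ^ 28 * C ^ 24) + ((6440353792 : ℂ) * E ^ 2 * B ^ 29 * C + ((4076863488 : ℂ) * E ^ 2 * B ^ 29 * C ^ 25 + (6440353792 : ℂ) * E ^ 2 * B ^ 30 * C ^ 2)))) + ((((4076863488 : ℂ) * E ^ 2 * B ^ 30 * C ^ 26 + (6440353792 : ℂ) * E ^ 2 * B ^ 31 * C ^ 3) + ((4076863488 : ℂ) * E ^ 2 * B ^ 31 * C ^ 27 + ((2264924160 : ℂ) * E ^ 2 * B ^ 32 * C ^ 4 + (2264924160 : ℂ) * E ^ 2 * B ^ 33 * C ^ 5))) + (((2264924160 : ℂ) * E ^ 2 * B ^ 34 * C ^ 6 + (2264924160 : ℂ) * E ^ 2 * B ^ 35 * C ^ 7) + ((2264924160 : ℂ) * E ^ 2 * B ^ 36 * C ^ 8 + ((2264924160 : ℂ) * E ^ 2 * B ^ 37 * C ^ 9 + (2264924160 : ℂ) * E ^ 2 * B ^ 38 * C ^ 10))))))) + (((((((2264924160 : ℂ) * E ^ 2 * B ^ 39 * C ^ 11 + (4076863488 : ℂ)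 * E ^ 2 * B ^ 40 * C ^ 12) + ((4076863488 : ℂ) * E ^ 2 * B ^ 41 * C ^ 13 + (4076863488 : ℂ) * E ^ 2 * B ^ 42 * C ^ 14)) + (((4076863488 : ℂ) * E ^ 2 * B ^ 43 * C ^ 15 + (0 : ℂ) * E ^ 4 * C ^ 8) + ((0 : ℂ) * E ^ 4 * B * C ^ 9 + ((0 : ℂ) * E ^ 4 * B ^ 2 * C ^ 10 + (0 : ℂ) * E ^ 4 * B ^ 3 * C ^ 11)))) + ((((1233125376 : ℂ) * E ^ 4 * B ^ 4 * C ^ 12 + (1233125376 : ℂ) * E ^ 4 * B ^ 5 * C ^ 13) + ((1233125376 : ℂ) * E ^ 4 * B ^ 6 * C ^ 14 + (1233125376 : ℂ) * E ^ 4 * B ^ 7 * C ^ 15)) + (((2818572288 : ℂ) * E ^ 4 * B ^ 8 * C ^ 16 + (2818572288 : ℂ) * E ^ 4 * B ^ 9 * C ^ 17) + ((2818572288 : ℂ) * E ^ 4 * B ^ 10 * C ^ 18 + ((2818572288 : ℂ) * E ^ 4 * B ^ 11 * C ^ 19 + (2818572288 : ℂ) * E ^ 4 * B ^ 12 * C ^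 20))))) + (((((2818572288 : ℂ) * E ^ 4 * B ^ 13 * C ^ 21 + (2818572288 : ℂ) * E ^ 4 * B ^ 14 * C ^ 22) + ((2818572288 : ℂ) * E ^ 4 * B ^ 15 * C ^ 23 + (-8299020288 : ℂ) * E ^ 4 * B ^ 16)) + (((-2415919104 : ℂ) * E ^ 4 * B ^ 16 * C ^ 24 + (-8299020288 : ℂ) * E ^ 4 * B ^ 17 * C) + ((-2415919104 : ℂ) * E ^ 4 * B ^ 17 * C ^ 25 + ((-8299020288 : ℂ) * E ^ 4 * B ^ 18 * C ^ 2 + (-2415919104 : ℂ) * E ^ 4 * B ^ 18 * C ^ 26)))) + ((((-8299020288 : ℂ) * E ^ 4 * B ^ 19 * C ^ 3 + (-2415919104 : ℂ) * E ^ 4 * B ^ 19 * C ^ 27) + ((-5581111296 : ℂ) * E ^ 4 * B ^ 20 * C ^ 4 + ((-5581111296 : ℂ) * E ^ 4 * B ^ 21 * C ^ 5 + (-5581111296 : ℂ) * E ^ 4 * B ^ 22 * C ^ 6))) + (((-5581111296 : ℂ) * E ^ 4 * B ^ 23 * C ^ 7 + (-5581111296 : ℂ) * E ^ 4 * B ^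 24 * C ^ 8) + ((-5581111296 : ℂ) * E ^ 4 * B ^ 25 * C ^ 9 + ((-5581111296 : ℂ) * E ^ 4 * B ^ 26 * C ^ 10 + (-5581111296 : ℂ) * E ^ 4 * B ^ 27 * C ^ 11)))))) + ((((((-12023562240 : ℂ) * E ^ 4 * B ^ 28 * C ^ 12 + (-12023562240 : ℂ) * E ^ 4 * B ^ 29 * C ^ 13) + ((-12023562240 : ℂ) * E ^ 4 * B ^ 30 * C ^ 14 + (-12023562240 : ℂ) * E ^ 4 * B ^ 31 * C ^ 15)) + (((-1207959552 : ℂ) * E ^ 4 * B ^ 40 + (-1207959552 : ℂ) * E ^ 4 * B ^ 41 * C) + ((-1207959552 : ℂ) * E ^ 4 * B ^ 42 * C ^ 2 + ((-1207959552 : ℂ) * E ^ 4 * B ^ 43 * C ^ 3 + (0 : ℂ) * E ^ 6 * C ^ 20)))) + ((((0 : ℂ) * E ^ 6 * B * C ^ 21 + (0 : ℂ) * E ^ 6 * B ^ 2 * C ^ 22) + ((0 : ℂ) * E ^ 6 * B ^ 3 * C ^ 23 + ((294649856 : ℂ) * E ^ 6 * B ^ 4 + (268435456 : ℂ) * E ^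 6 * B ^ 4 * C ^ 24))) + (((294649856 : ℂ) * E ^ 6 * B ^ 5 * C + (268435456 : ℂ) * E ^ 6 * B ^ 5 * C ^ 25) + ((294649856 : ℂ) * E ^ 6 * B ^ 6 * C ^ 2 + ((268435456 : ℂ) * E ^ 6 * B ^ 6 * C ^ 26 + (294649856 : ℂ) * E ^ 6 * B ^ 7 * C ^ 3))))) + (((((268435456 : ℂ) * E ^ 6 * B ^ 7 * C ^ 27 + (-175112192 : ℂ) * E ^ 6 * B ^ 8 * C ^ 4) + ((-175112192 : ℂ) * E ^ 6 * B ^ 9 * C ^ 5 + (-175112192 : ℂ) * E ^ 6 * B ^ 10 * C ^ 6)) + (((-175112192 : ℂ) * E ^ 6 * B ^ 11 * C ^ 7 + (-175112192 : ℂ) * E ^ 6 * B ^ 12 * C ^ 8) + ((-175112192 : ℂ) * E ^ 6 * B ^ 13 * C ^ 9 + ((-175112192 : ℂ) * E ^ 6 * B ^ 14 * C ^ 10 + (-175112192 : ℂ) * E ^ 6 * B ^ 15 * C ^ 11)))) + ((((10235150336 : ℂ) * E ^ 6 * B ^ 16 * C ^ 12 + (10235150336 : ℂ) * E ^ 6 *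 B ^ 17 * C ^ 13) + ((10235150336 : ℂ) * E ^ 6 * B ^ 18 * C ^ 14 + ((10235150336 : ℂ) * E ^ 6 * B ^ 19 * C ^ 15 + (3057647616 : ℂ) * E ^ 6 * B ^ 20 * C ^ 16))) + (((3057647616 : ℂ) * E ^ 6 * B ^ 21 * C ^ 17 + (3057647616 : ℂ) * E ^ 6 * B ^ 22 * C ^ 18) + ((3057647616 : ℂ) * E ^ 6 * B ^ 23 * C ^ 19 + ((3057647616 : ℂ) * E ^ 6 * B ^ 24 * C ^ 20 + (3057647616 : ℂ) * E ^ 6 * B ^ 25 * C ^ 21)))))))) + ((((((((3057647616 : ℂ) * E ^ 6 * B ^ 26 * C ^ 22 + (3057647616 : ℂ) * E ^ 6 * B ^ 27 * C ^ 23) + ((6780616704 : ℂ) * E ^ 6 * B ^ 28 + (3057647616 : ℂ) * E ^ 6 * B ^ 28 * C ^ 24)) + (((6780616704 : ℂ) * E ^ 6 * B ^ 29 * C + (3057647616 : ℂ) * E ^ 6 * B ^ 29 * C ^ 25) + ((6780616704 : ℂ) * E ^ 6 * B ^ 30 * C ^ 2 + ((3057647616 : ℂ) * E ^ 6 * B ^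 30 * C ^ 26 + (6780616704 : ℂ) * E ^ 6 * B ^ 31 * C ^ 3)))) + ((((3057647616 : ℂ) * E ^ 6 * B ^ 31 * C ^ 27 + (3057647616 : ℂ) * E ^ 6 * B ^ 32 * C ^ 4) + ((3057647616 : ℂ) * E ^ 6 * B ^ 33 * C ^ 5 + (3057647616 : ℂ) * E ^ 6 * B ^ 34 * C ^ 6)) + (((3057647616 : ℂ) * E ^ 6 * B ^ 35 * C ^ 7 + (3057647616 : ℂ) * E ^ 6 * B ^ 36 * C ^ 8) + ((3057647616 : ℂ) * E ^ 6 * B ^ 37 * C ^ 9 + ((3057647616 : ℂ) * E ^ 6 * B ^ 38 * C ^ 10 + (3057647616 : ℂ) * E ^ 6 * B ^ 39 * C ^ 11))))) + (((((3057647616 : ℂ) * E ^ 6 * B ^ 40 * C ^ 12 + (3057647616 : ℂ) * E ^ 6 * B ^ 41 * C ^ 13) + ((3057647616 : ℂ) * E ^ 6 * B ^ 42 * C ^ 14 + (3057647616 : ℂ) * E ^ 6 * B ^ 43 * C ^ 15)) + (((0 : ℂ) * E ^ 8 * C ^ 8 + (0 : ℂ) * E ^ 8 * B * C ^ 9) +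 ((0 : ℂ) * E ^ 8 * B ^ 2 * C ^ 10 + ((0 : ℂ) * E ^ 8 * B ^ 3 * C ^ 11 + (-1655701504 : ℂ) * E ^ 8 * B ^ 4 * C ^ 12)))) + ((((-1655701504 : ℂ) * E ^ 8 * B ^ 5 * C ^ 13 + (-1655701504 : ℂ) * E ^ 8 * B ^ 6 * C ^ 14) + ((-1655701504 : ℂ) * E ^ 8 * B ^ 7 * C ^ 15 + ((-452984832 : ℂ) * E ^ 8 * B ^ 8 * C ^ 16 + (-452984832 : ℂ) * E ^ 8 * B ^ 9 * C ^ 17))) + (((-452984832 : ℂ) * E ^ 8 * B ^ 10 * C ^ 18 + (-452984832 : ℂ) * E ^ 8 * B ^ 11 * C ^ 19) + ((-452984832 : ℂ) * E ^ 8 * B ^ 12 * C ^ 20 + ((-452984832 : ℂ) * E ^ 8 * B ^ 13 * C ^ 21 + (-452984832 : ℂ) * E ^ 8 * B ^ 14 * C ^ 22)))))) + ((((((-452984832 : ℂ) * E ^ 8 * B ^ 15 * C ^ 23 + (-6935281664 : ℂ) * E ^ 8 * B ^ 16) + ((-2717908992 : ℂ) * E ^ 8 * B ^ 16 * C ^ 24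 + (-6935281664 : ℂ) * E ^ 8 * B ^ 17 * C)) + (((-2717908992 : ℂ) * E ^ 8 * B ^ 17 * C ^ 25 + (-6935281664 : ℂ) * E ^ 8 * B ^ 18 * C ^ 2) + ((-2717908992 : ℂ) * E ^ 8 * B ^ 18 * C ^ 26 + ((-6935281664 : ℂ) * E ^ 8 * B ^ 19 * C ^ 3 + (-2717908992 : ℂ) * E ^ 8 * B ^ 19 * C ^ 27)))) + ((((-4529848320 : ℂ) * E ^ 8 * B ^ 20 * C ^ 4 + (-4529848320 : ℂ) * E ^ 8 * B ^ 21 * C ^ 5) + ((-4529848320 : ℂ) * E ^ 8 * B ^ 22 * C ^ 6 + ((-4529848320 : ℂ) * E ^ 8 * B ^ 23 * C ^ 7 + (-4529848320 : ℂ) * E ^ 8 * B ^ 24 * C ^ 8))) + (((-4529848320 : ℂ) * E ^ 8 * B ^ 25 * C ^ 9 + (-4529848320 : ℂ) * E ^ 8 * B ^ 26 * C ^ 10) + ((-4529848320 : ℂ) * E ^ 8 * B ^ 27 * C ^ 11 + ((-8153726976 : ℂ) * E ^ 8 * B ^ 28 * C ^ 12 + (-8153726976 : ℂ) * E ^ 8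 * B ^ 29 * C ^ 13))))) + (((((-8153726976 : ℂ) * E ^ 8 * B ^ 30 * C ^ 14 + (-8153726976 : ℂ) * E ^ 8 * B ^ 31 * C ^ 15) + ((-1358954496 : ℂ) * E ^ 8 * B ^ 40 + (-1358954496 : ℂ) * E ^ 8 * B ^ 41 * C)) + (((-1358954496 : ℂ) * E ^ 8 * B ^ 42 * C ^ 2 + (-1358954496 : ℂ) * E ^ 8 * B ^ 43 * C ^ 3) + ((0 : ℂ) * E ^ 10 * C ^ 20 + ((0 : ℂ) * E ^ 10 * B * C ^ 21 + (0 : ℂ) * E ^ 10 * B ^ 2 * C ^ 22)))) + ((((0 : ℂ) * E ^ 10 * B ^ 3 * C ^ 23 + (1157627904 : ℂ) * E ^ 10 * B ^ 4) + ((603979776 : ℂ) * E ^ 10 * B ^ 4 * C ^ 24 + ((1157627904 : ℂ) * E ^ 10 * B ^ 5 * C + (603979776 : ℂ) * E ^ 10 * B ^ 5 * C ^ 25))) + (((1157627904 : ℂ) * E ^ 10 * B ^ 6 * C ^ 2 + (603979776 : ℂ) * E ^ 10 * B ^ 6 * C ^ 26) + ((1157627904 : ℂ) * E ^ 10 * B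 ^ 7 * C ^ 3 + ((603979776 : ℂ) * E ^ 10 * B ^ 7 * C ^ 27 + (704643072 : ℂ) * E ^ 10 * B ^ 8 * C ^ 4))))))) + (((((((704643072 : ℂ) * E ^ 10 * B ^ 9 * C ^ 5 + (704643072 : ℂ) * E ^ 10 * B ^ 10 * C ^ 6) + ((704643072 : ℂ) * E ^ 10 * B ^ 11 * C ^ 7 + (704643072 : ℂ) * E ^ 10 * B ^ 12 * C ^ 8)) + (((704643072 : ℂ) * E ^ 10 * B ^ 13 * C ^ 9 + (704643072 : ℂ) * E ^ 10 * B ^ 14 * C ^ 10) + ((704643072 : ℂ) * E ^ 10 * B ^ 15 * C ^ 11 + ((5133828096 : ℂ) * E ^ 10 * B ^ 16 * C ^ 12 + (5133828096 : ℂ) * E ^ 10 * B ^ 17 * C ^ 13)))) + ((((5133828096 : ℂ) * E ^ 10 * B ^ 18 * C ^ 14 + (5133828096 : ℂ) * E ^ 10 * B ^ 19 * C ^ 15) + ((2868903936 : ℂ) * E ^ 10 * B ^ 28 + (2868903936 : ℂ) * E ^ 10 * B ^ 29 * C)) + (((2868903936 : ℂ) * E ^ 10 * B ^ 30 * C ^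 2 + (2868903936 : ℂ) * E ^ 10 * B ^ 31 * C ^ 3) + ((0 : ℂ) * E ^ 12 * C ^ 8 + ((0 : ℂ) * E ^ 12 * B * C ^ 9 + (0 : ℂ) * E ^ 12 * B ^ 2 * C ^ 10))))) + (((((0 : ℂ) * E ^ 12 * B ^ 3 * C ^ 11 + (-939524096 : ℂ) * E ^ 12 * B ^ 4 * C ^ 12) + ((-939524096 : ℂ) * E ^ 12 * B ^ 5 * C ^ 13 + (-939524096 : ℂ) * E ^ 12 * B ^ 6 * C ^ 14)) + (((-939524096 : ℂ) * E ^ 12 * B ^ 7 * C ^ 15 + (-2375024640 : ℂ) * E ^ 12 * B ^ 16) + ((-2375024640 : ℂ) * E ^ 12 * B ^ 17 * C + ((-2375024640 : ℂ) * E ^ 12 * B ^ 18 * C ^ 2 + (-2375024640 : ℂ) * E ^ 12 * B ^ 19 * C ^ 3)))) + ((((-764411904 : ℂ) * E ^ 12 * B ^ 20 * C ^ 4 + (-764411904 : ℂ) * E ^ 12 * B ^ 21 * C ^ 5) + ((-764411904 : ℂ) * E ^ 12 * B ^ 22 * C ^ 6 + ((-764411904 : ℂ) * E ^ 12 * B ^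 23 * C ^ 7 + (-764411904 : ℂ) * E ^ 12 * B ^ 24 * C ^ 8))) + (((-764411904 : ℂ) * E ^ 12 * B ^ 25 * C ^ 9 + (-764411904 : ℂ) * E ^ 12 * B ^ 26 * C ^ 10) + ((-764411904 : ℂ) * E ^ 12 * B ^ 27 * C ^ 11 + ((-764411904 : ℂ) * E ^ 12 * B ^ 28 * C ^ 12 + (-764411904 : ℂ) * E ^ 12 * B ^ 29 * C ^ 13)))))) + ((((((-764411904 : ℂ) * E ^ 12 * B ^ 30 * C ^ 14 + (-764411904 : ℂ) * E ^ 12 * B ^ 31 * C ^ 15) + ((494927872 : ℂ) * E ^ 14 * B ^ 4 + (494927872 : ℂ) * E ^ 14 * B ^ 5 * C)) + (((494927872 : ℂ) * E ^ 14 * B ^ 6 * C ^ 2 + (494927872 : ℂ) * E ^ 14 * B ^ 7 * C ^ 3) + ((226492416 : ℂ) * E ^ 14 * B ^ 8 * C ^ 4 + ((226492416 : ℂ) * E ^ 14 * B ^ 9 * C ^ 5 + (226492416 : ℂ) * E ^ 14 * B ^ 10 * C ^ 6)))) + ((((226492416 : ℂ) * E ^ 14 * B ^ 11 * C ^ 7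 + (226492416 : ℂ) * E ^ 14 * B ^ 12 * C ^ 8) + ((226492416 : ℂ) * E ^ 14 * B ^ 13 * C ^ 9 + ((226492416 : ℂ) * E ^ 14 * B ^ 14 * C ^ 10 + (226492416 : ℂ) * E ^ 14 * B ^ 15 * C ^ 11))) + (((679477248 : ℂ) * E ^ 14 * B ^ 16 * C ^ 12 + (679477248 : ℂ) * E ^ 14 * B ^ 17 * C ^ 13) + ((679477248 : ℂ) * E ^ 14 * B ^ 18 * C ^ 14 + ((679477248 : ℂ) * E ^ 14 * B ^ 19 * C ^ 15 + (339738624 : ℂ) * E ^ 14 * B ^ 28))))) + (((((339738624 : ℂ) * E ^ 14 * B ^ 29 * C + (339738624 : ℂ) * E ^ 14 * B ^ 30 * C ^ 2) + ((339738624 : ℂ) * E ^ 14 * B ^ 31 * C ^ 3 + (0 : ℂ) * E ^ 16 * C ^ 8)) + (((0 : ℂ) * E ^ 16 * B * C ^ 9 + (0 : ℂ) * E ^ 16 * B ^ 2 * C ^ 10) + ((0 : ℂ) * E ^ 16 * B ^ 3 * C ^ 11 + ((-150994944 : ℂ) * E ^ 16 * B ^ 4 * C ^ 12 + (-150994944 :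 ℂ) * E ^ 16 * B ^ 5 * C ^ 13)))) + ((((-150994944 : ℂ) * E ^ 16 * B ^ 6 * C ^ 14 + (-150994944 : ℂ) * E ^ 16 * B ^ 7 * C ^ 15) + ((-301989888 : ℂ) * E ^ 16 * B ^ 16 + ((-301989888 : ℂ) * E ^ 16 * B ^ 17 * C + (-301989888 : ℂ) * E ^ 16 * B ^ 18 * C ^ 2))) + (((-301989888 : ℂ) * E ^ 16 * B ^ 19 * C ^ 3 + (67108864 : ℂ) * E ^ 18 * B ^ 4) + ((67108864 : ℂ) * E ^ 18 * B ^ 5 * C + ((67108864 : ℂ) * E ^ 18 * B ^ 6 * C ^ 2 + (67108864 : ℂ) * E ^ 18 * B ^ 7 * C ^ 3))))))))))) * hBC + (((((((((939524096 : ℂ) * F ^ 2 * B ^ 16 * C ^ 36 + (2013265920 : ℂ) * F ^ 2 * B ^ 28 * C ^ 24) + ((1207959552 : ℂ) * F ^ 2 * B ^ 40 * C ^ 12 + (134217728 : ℂ) * F ^ 2 * B ^ 52)) + (((-301989888 : ℂ) * F ^ 4 * B ^ 4 * C ^ 36 + (-3510632448 : ℂ) * F ^ 4 * B ^ 16 *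 C ^ 24) + ((-4076863488 : ℂ) * F ^ 4 * B ^ 28 * C ^ 12 + ((-868220928 : ℂ) * F ^ 4 * B ^ 40 + (859963392 : ℂ) * F ^ 6 * B ^ 4 * C ^ 24)))) + ((((3798171648 : ℂ) * F ^ 6 * B ^ 16 * C ^ 12 + (1648263168 : ℂ) * F ^ 6 * B ^ 28) + ((-725594112 : ℂ) * F ^ 8 * B ^ 4 * C ^ 12 + (-1088391168 : ℂ) * F ^ 8 * B ^ 16)) + (((-150994944 : ℂ) * F ^ 8 * B ^ 16 * C ^ 24 + (-201326592 : ℂ) * F ^ 8 * B ^ 28 * C ^ 12) + ((-50331648 : ℂ) * F ^ 8 * B ^ 40 + ((153055008 : ℂ) * F ^ 10 * B ^ 4 + (42467328 : ℂ) * F ^ 10 * B ^ 4 * C ^ 24))))) + (((((346816512 : ℂ) * F ^ 10 * B ^ 16 * C ^ 12 + (176947200 : ℂ) * F ^ 10 * B ^ 28) + ((-71663616 : ℂ) * F ^ 12 * B ^ 4 * C ^ 12 + (-161243136 : ℂ) * F ^ 12 * B ^ 16)) + (((22674816 : ℂ) * F ^ 14 * B ^ 4 + (7864320 : ℂ) *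 F ^ 14 * B ^ 16 * C ^ 12) + ((4718592 : ℂ) * F ^ 14 * B ^ 28 + ((-1769472 : ℂ) * F ^ 16 * B ^ 4 * C ^ 12 + (-7962624 : ℂ) * F ^ 16 * B ^ 16)))) + ((((1119744 : ℂ) * F ^ 18 * B ^ 4 + (-131072 : ℂ) * F ^ 20 * B ^ 16) + ((18432 : ℂ) * F ^ 22 * B ^ 4 + ((2113929216 : ℂ) * E ^ 2 * B ^ 16 * C ^ 36 + (4529848320 : ℂ) * E ^ 2 * B ^ 28 * C ^ 24))) + (((2717908992 : ℂ) * E ^ 2 * B ^ 40 * C ^ 12 + (301989888 : ℂ) * E ^ 2 * B ^ 52) + ((-9295626240 : ℂ) * E ^ 2 * F ^ 2 * B ^ 16 * C ^ 24 + ((-12394168320 : ℂ) * E ^ 2 * F ^ 2 * B ^ 28 * C ^ 12 + (-3098542080 : ℂ) * E ^ 2 * F ^ 2 * B ^ 40)))))) + ((((((679477248 : ℂ) * E ^ 2 * F ^ 4 * B ^ 4 * C ^ 24 + (12805005312 : ℂ) * E ^ 2 * F ^ 4 * B ^ 16 * C ^ 12) + ((7184719872 : ℂ) * E ^ 2 *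 F ^ 4 * B ^ 28 + (-1146617856 : ℂ) * E ^ 2 * F ^ 6 * B ^ 4 * C ^ 12)) + (((-5028770304 : ℂ) * E ^ 2 * F ^ 6 * B ^ 16 + (-339738624 : ℂ) * E ^ 2 * F ^ 6 * B ^ 16 * C ^ 24) + ((-452984832 : ℂ) * E ^ 2 * F ^ 6 * B ^ 28 * C ^ 12 + ((-113246208 : ℂ) * E ^ 2 * F ^ 6 * B ^ 40 + (362797056 : ℂ) * E ^ 2 * F ^ 8 * B ^ 4)))) + ((((968294400 : ℂ) * E ^ 2 * F ^ 8 * B ^ 16 * C ^ 12 + (580976640 : ℂ) * E ^ 2 * F ^ 8 * B ^ 28) + ((-56623104 : ℂ) * E ^ 2 * F ^ 10 * B ^ 4 * C ^ 12 + ((-617601024 : ℂ) * E ^ 2 * F ^ 10 * B ^ 16 + (35831808 : ℂ) * E ^ 2 * F ^ 12 * B ^ 4))) + (((17694720 : ℂ) * E ^ 2 * F ^ 12 * B ^ 16 * C ^ 12 + (10616832 : ℂ) * E ^ 2 * F ^ 12 * B ^ 28) + ((-24207360 : ℂ) * E ^ 2 * F ^ 14 * B ^ 16 + ((884736 : ℂ)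 * E ^ 2 * F ^ 16 * B ^ 4 + (-294912 : ℂ) * E ^ 2 * F ^ 18 * B ^ 16))))) + (((((-536870912 : ℂ) * E ^ 4 * B ^ 4 * C ^ 36 + (-6241124352 : ℂ) * E ^ 4 * B ^ 16 * C ^ 24) + ((-7247757312 : ℂ) * E ^ 4 * B ^ 28 * C ^ 12 + (-1543503872 : ℂ) * E ^ 4 * B ^ 40)) + (((1528823808 : ℂ) * E ^ 4 * F ^ 2 * B ^ 4 * C ^ 24 + (14498660352 : ℂ) * E ^ 4 * F ^ 2 * B ^ 16 * C ^ 12) + ((7578058752 : ℂ) * E ^ 4 * F ^ 2 * B ^ 28 + ((-1742929920 : ℂ) * E ^ 4 * F ^ 4 * B ^ 4 * C ^ 12 + (-7843184640 : ℂ) * E ^ 4 * F ^ 4 * B ^ 16)))) + ((((558752256 : ℂ) * E ^ 4 * F ^ 6 * B ^ 4 + (75497472 : ℂ) * E ^ 4 * F ^ 6 * B ^ 4 * C ^ 24) + ((616562688 : ℂ) * E ^ 4 * F ^ 6 * B ^ 16 * C ^ 12 + ((314572800 : ℂ) * E ^ 4 * F ^ 6 * B ^ 28 + (-127401984 : ℂ)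 * E ^ 4 * F ^ 8 * B ^ 4 * C ^ 12))) + (((-673972224 : ℂ) * E ^ 4 * F ^ 8 * B ^ 16 + (54466560 : ℂ) * E ^ 4 * F ^ 10 * B ^ 4) + ((-3145728 : ℂ) * E ^ 4 * F ^ 12 * B ^ 4 * C ^ 12 + ((-14155776 : ℂ) * E ^ 4 * F ^ 12 * B ^ 16 + (1990656 : ℂ) * E ^ 4 * F ^ 14 * B ^ 4))))))) + (((((((32768 : ℂ) * E ^ 4 * F ^ 18 * B ^ 4 + (1207959552 : ℂ) * E ^ 6 * B ^ 4 * C ^ 24) + ((5335154688 : ℂ) * E ^ 6 * B ^ 16 * C ^ 12 + (2315255808 : ℂ) * E ^ 6 * B ^ 28)) + (((-2038431744 : ℂ) * E ^ 6 * F ^ 2 * B ^ 4 * C ^ 12 + (-5123342336 : ℂ) * E ^ 6 * F ^ 2 * B ^ 16) + ((-603979776 : ℂ) * E ^ 6 * F ^ 2 * B ^ 16 * C ^ 24 + ((-805306368 : ℂ) * E ^ 6 * F ^ 2 * B ^ 28 * C ^ 12 + (-201326592 : ℂ) * E ^ 6 * F ^ 2 * B ^ 40)))) + ((((720470016 : ℂ)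 * E ^ 6 * F ^ 4 * B ^ 4 + (169869312 : ℂ) * E ^ 6 * F ^ 4 * B ^ 4 * C ^ 24) + ((1387266048 : ℂ) * E ^ 6 * F ^ 4 * B ^ 16 * C ^ 12 + (707788800 : ℂ) * E ^ 6 * F ^ 4 * B ^ 28)) + (((-387317760 : ℂ) * E ^ 6 * F ^ 6 * B ^ 4 * C ^ 12 + (-871464960 : ℂ) * E ^ 6 * F ^ 6 * B ^ 16) + ((154400256 : ℂ) * E ^ 6 * F ^ 8 * B ^ 4 + ((62914560 : ℂ) * E ^ 6 * F ^ 8 * B ^ 16 * C ^ 12 + (37748736 : ℂ) * E ^ 6 * F ^ 8 * B ^ 28))))) + (((((-14155776 : ℂ) * E ^ 6 * F ^ 10 * B ^ 4 * C ^ 12 + (-63700992 : ℂ) * E ^ 6 * F ^ 10 * B ^ 16) + ((10530816 : ℂ) * E ^ 6 * F ^ 12 * B ^ 4 + (-1572864 : ℂ) * E ^ 6 * F ^ 14 * B ^ 16)) + (((221184 : ℂ) * E ^ 6 * F ^ 16 * B ^ 4 + (-805306368 : ℂ) * E ^ 8 * B ^ 4 * C ^ 12) + ((-1207959552 : ℂ)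 * E ^ 8 * B ^ 16 + ((-1358954496 : ℂ) * E ^ 8 * B ^ 16 * C ^ 24 + (-1811939328 : ℂ) * E ^ 8 * B ^ 28 * C ^ 12)))) + ((((-452984832 : ℂ) * E ^ 8 * B ^ 40 + (509607936 : ℂ) * E ^ 8 * F ^ 2 * B ^ 4) + ((3873177600 : ℂ) * E ^ 8 * F ^ 2 * B ^ 16 * C ^ 12 + ((2323906560 : ℂ) * E ^ 8 * F ^ 2 * B ^ 28 + (-226492416 : ℂ) * E ^ 8 * F ^ 4 * B ^ 4 * C ^ 12))) + (((-2470404096 : ℂ) * E ^ 8 * F ^ 4 * B ^ 16 + (168493056 : ℂ) * E ^ 8 * F ^ 6 * B ^ 4) + ((141557760 : ℂ) * E ^ 8 * F ^ 6 * B ^ 16 * C ^ 12 + ((84934656 : ℂ) * E ^ 8 * F ^ 6 * B ^ 28 + (-193658880 : ℂ) * E ^ 8 * F ^ 8 * B ^ 16)))))) + ((((((7077888 : ℂ) * E ^ 8 * F ^ 10 * B ^ 4 + (-3538944 : ℂ) * E ^ 8 * F ^ 12 * B ^ 16) + ((134217728 : ℂ) * E ^ 10 * B ^ 4 + (301989888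 : ℂ) * E ^ 10 * B ^ 4 * C ^ 24)) + (((2466250752 : ℂ) * E ^ 10 * B ^ 16 * C ^ 12 + (1258291200 : ℂ) * E ^ 10 * B ^ 28) + ((-509607936 : ℂ) * E ^ 10 * F ^ 2 * B ^ 4 * C ^ 12 + ((-2695888896 : ℂ) * E ^ 10 * F ^ 2 * B ^ 16 + (217866240 : ℂ) * E ^ 10 * F ^ 4 * B ^ 4)))) + ((((-25165824 : ℂ) * E ^ 10 * F ^ 6 * B ^ 4 * C ^ 12 + (-113246208 : ℂ) * E ^ 10 * F ^ 6 * B ^ 16) + ((15925248 : ℂ) * E ^ 10 * F ^ 8 * B ^ 4 + ((393216 : ℂ) * E ^ 10 * F ^ 12 * B ^ 4 + (-402653184 : ℂ) * E ^ 12 * B ^ 4 * C ^ 12))) + (((-905969664 : ℂ) * E ^ 12 * B ^ 16 + (254803968 : ℂ) * E ^ 12 * F ^ 2 * B ^ 4) + ((125829120 : ℂ) * E ^ 12 * F ^ 2 * B ^ 16 * C ^ 12 + ((75497472 : ℂ) * E ^ 12 * F ^ 2 * B ^ 28 + (-28311552 : ℂ) * E ^ 12 * F ^ 4 * B ^ 4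 * C ^ 12))))) + (((((-127401984 : ℂ) * E ^ 12 * F ^ 4 * B ^ 16 + (30498816 : ℂ) * E ^ 12 * F ^ 6 * B ^ 4) + ((-6291456 : ℂ) * E ^ 12 * F ^ 8 * B ^ 16 + (884736 : ℂ) * E ^ 12 * F ^ 10 * B ^ 4)) + (((100663296 : ℂ) * E ^ 14 * B ^ 4 + (283115520 : ℂ) * E ^ 14 * B ^ 16 * C ^ 12) + ((169869312 : ℂ) * E ^ 14 * B ^ 28 + ((-387317760 : ℂ) * E ^ 14 * F ^ 2 * B ^ 16 + (14155776 : ℂ) * E ^ 14 * F ^ 4 * B ^ 4)))) + ((((-14155776 : ℂ) * E ^ 14 * F ^ 6 * B ^ 16 + (-50331648 : ℂ) * E ^ 16 * B ^ 4 * C ^ 12) + ((-226492416 : ℂ) * E ^ 16 * B ^ 16 + ((31850496 : ℂ) * E ^ 16 * F ^ 2 * B ^ 4 + (1572864 : ℂ) * E ^ 16 * F ^ 6 * B ^ 4))) + (((25165824 : ℂ) * E ^ 18 * B ^ 4 + (-8388608 : ℂ) * E ^ 18 * F ^ 2 * B ^ 16) + ((1179648 : ℂ) * E ^ 18 * F ^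 4 * B ^ 4 + ((-18874368 : ℂ) * E ^ 20 * B ^ 16 + (2097152 : ℂ) * E ^ 22 * B ^ 4))))))))) * Complex.I_mul_I
end

section
/- One-dimensional canonical LOD functions are piecewise cubic: on D=(0,1) with a_c(u,v)=∫₀¹ u'v' dx, if v_LOD ∈ V_LOD (the a_c-orthogonal complement of W = ker(L²-projection onto the P1 finite element space V_H on a partition of (0,1))), then v_LOD = Δ⁻¹v_H for some v_H ∈ V_H (where Δ⁻¹ denotes the solution operator a_c(Δ⁻¹f, w) = (f,w) for all w ∈ H¹₀), and consequently v_LOD is a piecewise polynomial of degree at most 3 on the partition. -/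
open MeasureTheory
set_option linter.unusedSectionVars false

namespace LOD1D

variable (M : ℕ) (xp : Fin (M + 1) → ℝ)

/-- node values extended to ℕ -/
noncomputable def X (n : ℕ) : ℝ := xp ⟨min n M, by omega⟩

/-- hat function at node j -/
noncomputable def hat (j : ℕ) : ℝ → ℝ := fun y =>
  max 0 (min ((y - X M xp (j-1)) / (X M xp j - X M xp (j-1)))
            ((X M xp (j+1) - y) / (X M xp (j+1) - X M xp j)))

/-- antiderivative from the right -/
noncomputable def Phi (f : ℝ → ℝ) : ℝ → ℝ := fun y => ∫ t in y..1, f t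

variable {M xp}

section Xfacts
variable (hxp : StrictMono xp) (hxp0 : xp 0 = 0) (hxpM : xp (Fin.last M) = 1)
include hxp

theorem X_mono : Monotone (X M xp) := fun n m h => by
  unfold X; exact hxp.monotone (by simp [Fin.le_def]; omega)

theorem X_lt {n m : ℕ} (h : n < m) (hm : m ≤ M) :
    X M xp n < X M xp m := by
  unfold X; exact hxp (by simp [Fin.lt_def]; omega)

omit hxp

theorem X_castSucc (i : Fin M) : X M xp i.castSucc.val = xp i.castSucc := by
  unfold X; congr 1; exact Fin.ext (by simp only [Fin.coe_castSucc]; omega)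

theorem X_succ (i : Fin M) : X M xp (i.val + 1) = xp i.succ := by
  unfold X; congr 1; exact Fin.ext (by simp [Fin.val_succ])

include hxp0 in
theorem X_zero : X M xp 0 = 0 := by
  unfold X; rwa [show (⟨min 0 M, by omega⟩ : Fin (M+1)) = 0 from Fin.ext (by simp)]

include hxpM in
theorem X_top {n : ℕ} (hn : M ≤ n) : X M xp n = 1 := by
  unfold X
  rwa [show (⟨min n M, by omega⟩ : Fin (M+1)) = Fin.last M from Fin.ext (by simp; omega)]

include hxp hxp0 in
theorem X_nonneg (n : ℕ) : 0 ≤ X M xp n := by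
  rw [← X_zero (M := M) (xp := xp) hxp0]
  exact X_mono hxp (Nat.zero_le n)

include hxp hxpM in
theorem X_le_one (n : ℕ) : X M xp n ≤ 1 := by
  rw [← hxpM]; unfold X
  exact hxp.monotone (by simp [Fin.le_def])

end Xfacts

section HatFacts
variable (hxp : StrictMono xp) {j : ℕ} (hj1 : 1 ≤ j) (hjM : j + 1 ≤ M)

theorem hat_continuous (j : ℕ) : Continuous (hat M xp j) := by
  unfold hat
  exact continuous_const.max (((continuous_id.sub continuous_const).div_const _).min
    ((continuous_const.sub continuous_id).div_const _))

include hxp hj1 hjM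

theorem hab : X M xp (j-1) < X M xp j := X_lt hxp (by omega) (by omega)
theorem hbc : X M xp j < X M xp (j+1) := X_lt hxp (by omega) (by omega)

theorem hat_left0 {y : ℝ} (h : y ≤ X M xp (j-1)) : hat M xp j y = 0 := by
  have := hab hxp hj1 hjM
  unfold hat
  exact max_eq_left (le_trans (min_le_left _ _)
    (div_nonpos_of_nonpos_of_nonneg (by linarith) (by linarith)))

theorem hat_right0 {y : ℝ} (h : X M xp (j+1) ≤ y) : hat M xp j y = 0 := by
  have := hbc hxp hj1 hjM
  unfold hat
  exact max_eq_left (le_trans (min_le_right _ _)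
    (div_nonpos_of_nonpos_of_nonneg (by linarith) (by linarith)))

theorem hat_on_left {y : ℝ} (h1 : X M xp (j-1) ≤ y) (h2 : y ≤ X M xp j) :
    hat M xp j y = (y - X M xp (j-1)) / (X M xp j - X M xp (j-1)) := by
  have ha := hab hxp hj1 hjM
  have hb := hbc hxp hj1 hjM
  unfold hat
  rw [min_eq_left, max_eq_right]
  · exact div_nonneg (by linarith) (by linarith)
  · calc (y - X M xp (j-1)) / (X M xp j - X M xp (j-1)) ≤ 1 := by
          rw [div_le_one (by linarith)]; linarith
      _ ≤ (X M xp (j+1) - y) / (X M xp (j+1) - X M xp j) := by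
          rw [le_div_iff₀ (by linarith)]; linarith

theorem hat_on_right {y : ℝ} (h1 : X M xp j ≤ y) (h2 : y ≤ X M xp (j+1)) :
    hat M xp j y = (X M xp (j+1) - y) / (X M xp (j+1) - X M xp j) := by
  have ha := hab hxp hj1 hjM
  have hb := hbc hxp hj1 hjM
  unfold hat
  rw [min_eq_right, max_eq_right]
  · exact div_nonneg (by linarith) (by linarith)
  · calc (X M xp (j+1) - y) / (X M xp (j+1) - X M xp j) ≤ 1 := by
          rw [div_le_one (by linarith)]; linarith
      _ ≤ (y - X M xp (j-1)) / (X M xp j - X M xp (j-1)) := by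
          rw [le_div_iff₀ (by linarith)]; linarith

theorem hat_node_self : hat M xp j (X M xp j) = 1 := by
  have ha := hab hxp hj1 hjM
  rw [hat_on_left hxp hj1 hjM ha.le le_rfl, div_self (by linarith)]

theorem hat_node_ne {m : ℕ} (hm : m ≠ j) : hat M xp j (X M xp m) = 0 := by
  rcases lt_or_gt_of_ne hm with h | h
  · exact hat_left0 hxp hj1 hjM (X_mono hxp (by omega))
  · exact hat_right0 hxp hj1 hjM (X_mono hxp (by omega))

end HatFacts

variable (M xp) in
/-- the family of hat functions, with a zero placeholder at index 0 -/
noncomputable def hfun (k : Fin M) : ℝ → ℝ := if k.val = 0 then (fun _ => 0) else hat M xp k.val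

theorem hfun_continuous (k : Fin M) : Continuous (hfun M xp k) := by
  unfold hfun; split
  · exact continuous_const
  · exact hat_continuous _

theorem affine_agree {s t a1 b1 a2 b2 : ℝ} (hst : s ≠ t)
    (h1 : a1 * s + b1 = a2 * s + b2) (h2 : a1 * t + b1 = a2 * t + b2) (y : ℝ) :
    a1 * y + b1 = a2 * y + b2 := by
  have ha : a1 * (s - t) = a2 * (s - t) := by ring_nf; linarith
  have : a1 = a2 := mul_right_cancel₀ (sub_ne_zero.2 hst) ha
  subst this
  have : b1 = b2 := by linarith
  subst this; rfl

section Main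
variable (hxp : StrictMono xp) (hxp0 : xp 0 = 0) (hxpM : xp (Fin.last M) = 1) (hM : 1 ≤ M)
include hxp

theorem hat_affine_on {j : ℕ} (hj1 : 1 ≤ j) (hjM : j + 1 ≤ M) (i : Fin M) :
    ∃ a b : ℝ, ∀ y ∈ Set.Icc (xp i.castSucc) (xp i.succ), hat M xp j y = a * y + b := by
  have e1 : xp i.castSucc = X M xp i.val := (X_castSucc i).symm
  have e2 : xp i.succ = X M xp (i.val + 1) := (X_succ i).symm
  rcases lt_or_ge (i.val) (j-1) with h | h
  · exact ⟨0, 0, fun y hy => by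
      rw [hat_left0 hxp hj1 hjM (le_trans (e2 ▸ hy.2) (X_mono hxp (by omega)))]; ring⟩
  rcases eq_or_lt_of_le h with h' | h'
  · refine ⟨1 / (X M xp j - X M xp (j-1)), -(X M xp (j-1)) / (X M xp j - X M xp (j-1)),
      fun y hy => ?_⟩
    have hy1 : X M xp (j-1) ≤ y := by rw [e1] at hy; have := hy.1; rwa [show i.val = j - 1 from h'.symm] at this
    have hy2 : y ≤ X M xp j := by rw [e2] at hy; have := hy.2; rwa [show i.val + 1 = j by omega] at this
    rw [hat_on_left hxp hj1 hjM hy1 hy2]; ring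
  rcases eq_or_lt_of_le (Nat.succ_le_of_lt h') with h'' | h''
  · -- i.val = j
    have hij : i.val = j := by omega
    refine ⟨-(1 / (X M xp (j+1) - X M xp j)), X M xp (j+1) / (X M xp (j+1) - X M xp j),
      fun y hy => ?_⟩
    have hy1 : X M xp j ≤ y := by rw [e1, hij] at hy; exact hy.1
    have hy2 : y ≤ X M xp (j+1) := by rw [e2, hij] at hy; exact hy.2
    rw [hat_on_right hxp hj1 hjM hy1 hy2]; field_simp; ring
  · -- i.val ≥ j + 1
    exact ⟨0, 0, fun y hy => by
      rw [hat_right0 hxp hj1 hjM (le_trans (X_mono hxp (show j + 1 ≤ i.val by omega)) (e1 ▸ hy.1))]; ring⟩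

theorem hfun_affine_on (k : Fin M) (i : Fin M) :
    ∃ a b : ℝ, ∀ y ∈ Set.Icc (xp i.castSucc) (xp i.succ), hfun M xp k y = a * y + b := by
  unfold hfun; split
  · exact ⟨0, 0, fun y _ => by simp⟩
  · exact hat_affine_on hxp (by omega) (by omega) i

include hxp0 hxpM hM

theorem exists_interval {y : ℝ} (hy : y ∈ Set.Icc (0:ℝ) 1) :
    ∃ i : ℕ, i < M ∧ X M xp i ≤ y ∧ y ≤ X M xp (i+1) := by
  classical
  set P : ℕ → Prop := fun k => X M xp k ≤ y with hP
  have h0 : P 0 := by rw [hP]; simpa [X_zero hxp0] using hy.1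
  set i0 := Nat.findGreatest P M with hi0
  have hspec : P i0 := Nat.findGreatest_spec (Nat.zero_le M) h0
  have hle : i0 ≤ M := Nat.findGreatest_le M
  rcases eq_or_lt_of_le hle with hEq | hlt
  · have h1 : X M xp (M - 1) ≤ X M xp i0 := X_mono hxp (by omega)
    refine ⟨M - 1, by omega, le_trans h1 hspec, ?_⟩
    have hX : X M xp (M - 1 + 1) = 1 := X_top hxpM (by omega)
    rw [hX]; exact hy.2
  · refine ⟨i0, hlt, hspec, le_of_not_gt fun hcon => ?_⟩
    exact Nat.findGreatest_is_greatest (Nat.lt_succ_self i0) (by omega) (le_of_lt hcon)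

end Main

section Interp
variable (hxp : StrictMono xp) (hxp0 : xp 0 = 0) (hxpM : xp (Fin.last M) = 1) (hM : 1 ≤ M)
variable {p : ℝ → ℝ} (hp0 : p 0 = 0) (hp1 : p 1 = 0)
include hxp hxp0 hxpM hM hp0 hp1

theorem node_sum {m : ℕ} (hm : m ≤ M) :
    ∑ k : Fin M, p (X M xp k.val) * hfun M xp k (X M xp m) = p (X M xp m) := by
  rcases Nat.eq_zero_or_pos m with rfl | hm1
  · have hz : ∀ k : Fin M, p (X M xp k.val) * hfun M xp k (X M xp 0) = 0 := by
      intro k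
      have hkM := k.isLt
      unfold hfun; split
      · simp
      · rw [hat_node_ne hxp (by omega) (by omega) (by omega), mul_zero]
    rw [Finset.sum_congr rfl fun k _ => hz k, Finset.sum_const, smul_zero,
      X_zero hxp0, hp0]
  rcases eq_or_lt_of_le hm with hEq | hmM
  · have hz : ∀ k : Fin M, p (X M xp k.val) * hfun M xp k (X M xp m) = 0 := by
      intro k
      have hkM := k.isLt
      unfold hfun; split
      · simp
      · rw [hat_node_ne hxp (by omega) (by omega) (by omega), mul_zero]
    rw [Finset.sum_congr rfl fun k _ => hz k, Finset.sum_const, smul_zero,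
      show X M xp m = 1 from X_top hxpM (by omega), hp1]
  · set K : Fin M := ⟨m, hmM⟩ with hK
    have hterm : ∀ k : Fin M, p (X M xp k.val) * hfun M xp k (X M xp m) =
        if k = K then p (X M xp m) else 0 := by
      intro k
      rcases eq_or_ne k K with hk | hk
      · rw [if_pos hk, hk]
        unfold hfun
        rw [if_neg (by simp [hK]; omega)]
        rw [show (K : Fin M).val = m from rfl, hat_node_self hxp (by omega) (by omega), mul_one]
      · rw [if_neg hk]
        unfold hfun; split
        · simp
        · rw [hat_node_ne hxp (by omega) (by omega)
            (fun h => hk (Fin.ext (by simp [hK, ← h]))), mul_zero]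
    rw [Finset.sum_congr rfl fun k _ => hterm k, Finset.sum_ite_eq' Finset.univ K,
      if_pos (Finset.mem_univ K)]

theorem interp (hpa : ∀ i : Fin M, ∃ a b : ℝ,
      ∀ y ∈ Set.Icc (xp i.castSucc) (xp i.succ), p y = a * y + b) :
    ∀ y ∈ Set.Icc (0:ℝ) 1, p y = ∑ k : Fin M, p (X M xp k.val) * hfun M xp k y := by
  intro y hy
  obtain ⟨i, hiM, hy1, hy2⟩ := exists_interval hxp hxp0 hxpM hM hy
  set I : Fin M := ⟨i, hiM⟩ with hI
  obtain ⟨a, b, hab⟩ := hpa I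
  choose A B hAB using fun k => hfun_affine_on hxp k I
  have e1 : xp I.castSucc = X M xp i := (X_castSucc I).symm
  have e2 : xp I.succ = X M xp (i+1) := (X_succ I).symm
  have hmem : ∀ z : ℝ, X M xp i ≤ z → z ≤ X M xp (i+1) →
      z ∈ Set.Icc (xp I.castSucc) (xp I.succ) := fun z h1 h2 => by
    rw [e1, e2]; exact ⟨h1, h2⟩
  have hRHS : ∀ z ∈ Set.Icc (xp I.castSucc) (xp I.succ),
      (∑ k : Fin M, p (X M xp k.val) * hfun M xp k z) =
      (∑ k : Fin M, p (X M xp k.val) * A k) * z + (∑ k : Fin M, p (X M xp k.val) * B k) := by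
    intro z hz
    rw [Finset.sum_mul, ← Finset.sum_add_distrib]
    exact Finset.sum_congr rfl fun k _ => by rw [hAB k z hz]; ring
  have hii : X M xp i ≤ X M xp (i+1) := X_mono hxp (by omega)
  have m1 : X M xp i ∈ Set.Icc (xp I.castSucc) (xp I.succ) := hmem _ le_rfl hii
  have m2 : X M xp (i+1) ∈ Set.Icc (xp I.castSucc) (xp I.succ) := hmem _ hii le_rfl
  have end1 : a * X M xp i + b =
      (∑ k : Fin M, p (X M xp k.val) * A k) * X M xp i + (∑ k : Fin M, p (X M xp k.val) * B k) := by
    rw [← hRHS _ m1, node_sum hxp hxp0 hxpM hM hp0 hp1 (by omega), ← hab _ m1]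
  have end2 : a * X M xp (i+1) + b =
      (∑ k : Fin M, p (X M xp k.val) * A k) * X M xp (i+1) + (∑ k : Fin M, p (X M xp k.val) * B k) := by
    rw [← hRHS _ m2, node_sum hxp hxp0 hxpM hM hp0 hp1 (by omega), ← hab _ m2]
  have hne : X M xp i ≠ X M xp (i+1) := ne_of_lt (X_lt hxp (by omega) (by omega))
  rw [hab y (hmem y hy1 hy2), hRHS y (hmem y hy1 hy2)]
  exact affine_agree hne end1 end2 y

end Interp

section Analysis

theorem Phi_hasDerivAt {f : ℝ → ℝ} (hf : Continuous f) (y : ℝ) :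
    HasDerivAt (Phi f) (-(f y)) y :=
  intervalIntegral.integral_hasDerivAt_left (hf.intervalIntegrable _ _)
    (hf.stronglyMeasurableAtFilter _ _) hf.continuousAt

theorem Phi_continuous {f : ℝ → ℝ} (hf : Continuous f) : Continuous (Phi f) := by
  have : Differentiable ℝ (Phi f) := fun y => (Phi_hasDerivAt hf y).differentiableAt
  exact this.continuous

theorem Phi_one (f : ℝ → ℝ) : Phi f 1 = 0 := by
  unfold Phi; simp

theorem memLp2 {f : ℝ → ℝ} (hf : Continuous f) :
    MemLp f 2 (volume.restrict (Set.Icc (0:ℝ) 1)) := by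
  haveI : IsFiniteMeasure (volume.restrict (Set.Icc (0:ℝ) 1)) :=
    ⟨by rw [Measure.restrict_apply_univ]; exact measure_Icc_lt_top⟩
  obtain ⟨C, hC⟩ := (isCompact_Icc (a := (0:ℝ)) (b := 1)).exists_bound_of_continuousOn
    hf.continuousOn
  exact MemLp.of_bound hf.aestronglyMeasurable.restrict C
    ((ae_restrict_iff' measurableSet_Icc).2 (Filter.Eventually.of_forall hC))

theorem inner_toLp {f g : ℝ → ℝ} (hf : Continuous f) (hg : Continuous g) :
    inner ℝ ((memLp2 hf).toLp f) ((memLp2 hg).toLp g) = ∫ y in (0:ℝ)..1, f y * g y := by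
  rw [L2.inner_def]
  rw [intervalIntegral.integral_of_le zero_le_one, ← integral_Icc_eq_integral_Ioc]
  refine integral_congr_ae ?_
  filter_upwards [(memLp2 hf).coeFn_toLp, (memLp2 hg).coeFn_toLp] with y h1 h2
  rw [RCLike.inner_apply, h1, h2]
  simp
  ring

theorem Lp_coeFn_sum {ι : Type*} {μ : Measure ℝ} (s : Finset ι) (F : ι → Lp ℝ 2 μ) :
    (↑↑(∑ i ∈ s, F i) : ℝ → ℝ) =ᵐ[μ] fun y => ∑ i ∈ s, (F i : ℝ → ℝ) y := by
  induction s using Finset.cons_induction with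
  | empty => simp only [Finset.sum_empty]; exact Lp.coeFn_zero ℝ 2 μ
  | cons a s ha ih =>
    rw [Finset.sum_cons]
    filter_upwards [Lp.coeFn_add (F a) (∑ i ∈ s, F i), ih] with y h1 h2
    rw [h1]
    simp only [Pi.add_apply, Finset.sum_cons, h2]

end Analysis

end LOD1D

open LOD1D

/-- One-dimensional canonical LOD functions are piecewise cubic: on `D = (0,1)` with
`a_c(u,v) = ∫₀¹ u'v'`, if `v` belongs to the `a_c`-orthogonal complement of the detail space
`W` (the kernel of the `L²`-projection onto the P1 finite element space `V_H` on the
partition `0 = x₀ < … < x_M = 1`), then `v = Δ⁻¹ v_H` for some `v_H ∈ V_H` — i.e.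
`a_c(v, w) = (v_H, w)` for all test functions `w` — and consequently `v` is a piecewise
polynomial of degree at most `3` on the partition. -/
theorem lod_1d_piecewise_cubic
    (M : ℕ) (hM : 1 ≤ M)
    (xp : Fin (M + 1) → ℝ) (hxp : StrictMono xp)
    (hxp0 : xp 0 = 0) (hxpM : xp (Fin.last M) = 1)
    -- the P1 finite element space: continuous, piecewise affine, vanishing at 0 and 1
    (VH : Set (ℝ → ℝ))
    (hVH : VH = {p : ℝ → ℝ | Continuous p ∧ p 0 = 0 ∧ p 1 = 0 ∧
      ∀ i : Fin M, ∃ a b : ℝ, ∀ y ∈ Set.Icc (xp i.castSucc) (xp i.succ), p y = a * y + b})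
    (v : ℝ → ℝ) (hv : ContDiff ℝ 1 v) (hv0 : v 0 = 0) (hv1 : v 1 = 0)
    -- v is a_c-orthogonal to the detail space W = {w : (p, w)_{L²} = 0 ∀ p ∈ V_H}
    (horth : ∀ w : ℝ → ℝ, ContDiff ℝ 1 w → w 0 = 0 → w 1 = 0 →
      (∀ p ∈ VH, ∫ y in (0:ℝ)..1, p y * w y = 0) →
      ∫ y in (0:ℝ)..1, deriv v y * deriv w y = 0) :
    (∃ vH ∈ VH, ∀ w : ℝ → ℝ, ContDiff ℝ 1 w → w 0 = 0 → w 1 = 0 →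
      (∫ y in (0:ℝ)..1, deriv v y * deriv w y) = ∫ y in (0:ℝ)..1, vH y * w y) ∧
    (∀ i : Fin M, ∃ p : Polynomial ℝ, p.natDegree ≤ 3 ∧
      ∀ y ∈ Set.Icc (xp i.castSucc) (xp i.succ), v y = p.eval y) := by
  classical
  have hg_cont : Continuous (deriv v) := (contDiff_one_iff_deriv.mp hv).2
  -- the generating family: constant 1 and antiderivatives of the hat functions
  set u : Fin M → (ℝ → ℝ) :=
    fun k => if k.val = 0 then (fun _ => (1:ℝ)) else Phi (hat M xp k.val) with hu
  have hu_cont : ∀ k, Continuous (u k) := fun k => by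
    by_cases hk : k.val = 0
    · simp only [hu, if_pos hk]; exact continuous_const
    · simp only [hu, if_neg hk]; exact Phi_continuous (hat_continuous _)
  have hu_deriv : ∀ k y, HasDerivAt (u k) (-(hfun M xp k y)) y := fun k y => by
    by_cases hk : k.val = 0
    · simp only [hu, hfun, if_pos hk]
      simpa using hasDerivAt_const y (1:ℝ)
    · simp only [hu, hfun, if_neg hk]
      exact Phi_hasDerivAt (hat_continuous _) y
  set μ := volume.restrict (Set.Icc (0:ℝ) 1) with hμ
  set uL : Fin M → Lp ℝ 2 μ := fun k => (memLp2 (hu_cont k)).toLp _ with huL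
  set gL : Lp ℝ 2 μ := (memLp2 hg_cont).toLp _ with hgL
  set T := Submodule.span ℝ (Set.range uL) with hT
  haveI : FiniteDimensional ℝ T := FiniteDimensional.span_of_finite ℝ (Set.finite_range uL)
  haveI : CompleteSpace T := FiniteDimensional.complete ℝ T
  set P := T.orthogonalProjectionOnto gL with hP
  obtain ⟨c, hc⟩ := (Submodule.mem_span_range_iff_exists_fun ℝ).mp (SetLike.coe_mem P)
  set q : ℝ → ℝ := fun y => ∑ k, c k * u k y with hqdef
  have hq_cont : Continuous q :=
    continuous_finset_sum _ fun k _ => continuous_const.mul (hu_cont k)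
  set ψ : ℝ → ℝ := fun y => deriv v y - q y with hψdef
  have hψ_cont : Continuous ψ := hg_cont.sub hq_cont
  -- toLp of q is the projection
  have hqL : (memLp2 hq_cont).toLp q = (P : Lp ℝ 2 μ) := by
    rw [← hc]
    refine Lp.ext ?_
    refine ((memLp2 hq_cont).coeFn_toLp).trans ?_
    refine Filter.EventuallyEq.symm ?_
    refine (Lp_coeFn_sum Finset.univ (fun k => c k • uL k)).trans ?_
    have hk : ∀ k : Fin M, (↑↑(c k • uL k) : ℝ → ℝ) =ᵐ[μ] fun y => c k * u k y := by
      intro k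
      filter_upwards [Lp.coeFn_smul (c k) (uL k), (memLp2 (hu_cont k)).coeFn_toLp] with y h1 h2
      rw [h1]; simp only [Pi.smul_apply, smul_eq_mul, huL] at *; rw [h2]
    have hall : ∀ᵐ y ∂μ, ∀ k : Fin M, (↑↑(c k • uL k) : ℝ → ℝ) y = c k * u k y :=
      (MeasureTheory.ae_all_iff).2 fun k => hk k
    filter_upwards [hall] with y hy
    show (∑ k : Fin M, (↑↑(c k • uL k) : ℝ → ℝ) y) = ∑ k : Fin M, c k * u k y
    exact Finset.sum_congr rfl fun k _ => hy k
  have hψL : (memLp2 hψ_cont).toLp ψ = gL - (P : Lp ℝ 2 μ) := by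
    rw [← hqL, hgL]
    refine Lp.ext ?_
    refine ((memLp2 hψ_cont).coeFn_toLp).trans ?_
    refine Filter.EventuallyEq.symm ?_
    filter_upwards [Lp.coeFn_sub ((memLp2 hg_cont).toLp _) ((memLp2 hq_cont).toLp _),
      (memLp2 hg_cont).coeFn_toLp, (memLp2 hq_cont).coeFn_toLp] with y h1 h2 h3
    rw [h1]; simp only [Pi.sub_apply]; rw [h2, h3]
  -- ψ is orthogonal to each generator
  have hψu : ∀ k : Fin M, ∫ y in (0:ℝ)..1, ψ y * u k y = 0 := by
    intro k
    rw [← inner_toLp hψ_cont (hu_cont k), hψL]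
    exact Submodule.starProjection_inner_eq_zero (K := T) gL (uL k)
      (Submodule.subset_span ⟨k, rfl⟩)
  have hψ1 : ∫ y in (0:ℝ)..1, ψ y = 0 := by
    have h0 := hψu ⟨0, by omega⟩
    simpa [hu] using h0
  set w : ℝ → ℝ := fun y => ∫ t in (0:ℝ)..y, ψ t with hwdef
  have hw_deriv : ∀ y, HasDerivAt w (ψ y) y := fun y =>
    intervalIntegral.integral_hasDerivAt_right (hψ_cont.intervalIntegrable _ _)
      (hψ_cont.stronglyMeasurableAtFilter _ _) hψ_cont.continuousAt
  have hw_diff : Differentiable ℝ w := fun y => (hw_deriv y).differentiableAt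
  have hw_deriv' : deriv w = ψ := funext fun y => (hw_deriv y).deriv
  have hw_cd : ContDiff ℝ 1 w := contDiff_one_iff_deriv.mpr ⟨hw_diff, hw_deriv' ▸ hψ_cont⟩
  have hw0 : w 0 = 0 := intervalIntegral.integral_same
  have hw1 : w 1 = 0 := hψ1
  -- w is L²-orthogonal to VH
  have hwVH : ∀ p ∈ VH, ∫ y in (0:ℝ)..1, p y * w y = 0 := by
    intro p hp
    rw [hVH] at hp
    obtain ⟨hpc, hp0, hp1, hpa⟩ := hp
    have hPhip : ∀ y, HasDerivAt (Phi p) (-(p y)) y := Phi_hasDerivAt hpc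
    have parts := intervalIntegral.integral_mul_deriv_eq_deriv_mul
      (u := w) (u' := ψ) (v := Phi p) (v' := fun y => -(p y))
      (fun x _ => hw_deriv x) (fun x _ => hPhip x)
      (hψ_cont.intervalIntegrable 0 1) ((hpc.neg).intervalIntegrable 0 1)
    rw [hw0, hw1, Phi_one] at parts
    have hswap : ∫ y in (0:ℝ)..1, p y * w y = ∫ y in (0:ℝ)..1, ψ y * Phi p y := by
      have hneg : ∫ y in (0:ℝ)..1, w y * -(p y) = - ∫ y in (0:ℝ)..1, p y * w y := by
        rw [← intervalIntegral.integral_neg]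
        refine intervalIntegral.integral_congr fun y _ => by ring
      rw [hneg] at parts
      linarith [parts]
    rw [hswap]
    have hinterp := interp hxp hxp0 hxpM hM hp0 hp1 hpa
    have hPhiexp : ∀ y ∈ Set.Icc (0:ℝ) 1,
        Phi p y = ∑ k : Fin M, p (X M xp k.val) * Phi (hfun M xp k) y := by
      intro y hy
      unfold Phi
      rw [intervalIntegral.integral_congr
        (g := fun t => ∑ k : Fin M, p (X M xp k.val) * hfun M xp k t)
        (fun t ht => by
          rw [Set.uIcc_of_le hy.2] at ht
          exact hinterp t ⟨le_trans hy.1 ht.1, ht.2⟩)]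
      rw [intervalIntegral.integral_finset_sum (f := fun k t => p (X M xp k.val) * hfun M xp k t)
        (fun k _ => (continuous_const.mul (hfun_continuous k)).intervalIntegrable _ _)]
      exact Finset.sum_congr rfl fun k _ => intervalIntegral.integral_const_mul _ _
    have hcongr : ∫ y in (0:ℝ)..1, ψ y * Phi p y
        = ∫ y in (0:ℝ)..1, ∑ k : Fin M, p (X M xp k.val) * (ψ y * Phi (hfun M xp k) y) := by
      refine intervalIntegral.integral_congr fun y hy => ?_
      rw [Set.uIcc_of_le zero_le_one] at hy
      rw [hPhiexp y hy, Finset.mul_sum]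
      exact Finset.sum_congr rfl fun k _ => by ring
    rw [hcongr, intervalIntegral.integral_finset_sum (f := fun k y => p (X M xp k.val) * (ψ y * Phi (hfun M xp k) y))
      (fun k _ => (continuous_const.mul
        (hψ_cont.mul (Phi_continuous (hfun_continuous k)))).intervalIntegrable 0 1)]
    refine Finset.sum_eq_zero fun k _ => ?_
    rw [intervalIntegral.integral_const_mul]
    by_cases hk : k.val = 0
    · have hz : Phi (hfun M xp k) = fun _ => 0 := by
        funext z; unfold Phi hfun; rw [if_pos hk]; simp
      rw [hz]
      simp
    · have he : Phi (hfun M xp k) = u k := by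
        unfold hfun
        rw [if_neg hk]
        simp only [hu, if_neg hk]
      rw [he, hψu k, mul_zero]
  -- apply the a_c-orthogonality hypothesis
  have key := horth w hw_cd hw0 hw1 hwVH
  rw [hw_deriv'] at key
  set ψL : Lp ℝ 2 μ := (memLp2 hψ_cont).toLp ψ with hψLdef
  have hgψ : inner ℝ gL ψL = 0 := by
    rw [hgL, hψLdef, inner_toLp hg_cont hψ_cont]
    exact key
  have hPψ : inner ℝ ((P : Lp ℝ 2 μ)) ψL = 0 := by
    rw [real_inner_comm, hψL]
    exact Submodule.starProjection_inner_eq_zero (K := T) gL _ (SetLike.coe_mem P)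
  have hψψ : inner ℝ ψL ψL = 0 := by
    nth_rewrite 1 [hψL]
    rw [inner_sub_left]
    rw [hgψ, hPψ]
    ring
  have hψzero : ψL = 0 := inner_self_eq_zero.mp hψψ
  have haeq : deriv v =ᵐ[μ] q := by
    have hae : ψ =ᵐ[μ] 0 := by
      rw [← MemLp.toLp_eq_toLp_iff (memLp2 hψ_cont) (MemLp.zero), MemLp.toLp_zero]
      exact hψzero
    filter_upwards [hae] with y hy
    have h : deriv v y - q y = 0 := hy
    linarith
  have haeI : ∀ᵐ y ∂volume, y ∈ Set.Icc (0:ℝ) 1 → deriv v y = q y :=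
    (ae_restrict_iff' measurableSet_Icc).mp haeq
  constructor
  · -- Part 1: the variational identity with vH = -v'' ∈ VH
    refine ⟨fun y => ∑ k : Fin M, c k * hfun M xp k y, ?_, ?_⟩
    · rw [hVH]
      refine ⟨continuous_finset_sum _ fun k _ => continuous_const.mul (hfun_continuous k),
        ?_, ?_, ?_⟩
      · refine Finset.sum_eq_zero fun k _ => ?_
        by_cases hk : k.val = 0
        · simp [hfun, hk]
        · have hkM := k.isLt
          unfold hfun
          rw [if_neg hk, hat_left0 hxp (by omega) (by omega) (X_nonneg hxp hxp0 _), mul_zero]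
      · refine Finset.sum_eq_zero fun k _ => ?_
        by_cases hk : k.val = 0
        · simp [hfun, hk]
        · have hkM := k.isLt
          unfold hfun
          rw [if_neg hk, hat_right0 hxp (by omega) (by omega) (X_le_one hxp hxpM _), mul_zero]
      · intro i
        choose A B hAB using fun k => hfun_affine_on (M := M) (xp := xp) hxp k i
        refine ⟨∑ k : Fin M, c k * A k, ∑ k : Fin M, c k * B k, fun y hy => ?_⟩
        rw [Finset.sum_mul, ← Finset.sum_add_distrib]
        exact Finset.sum_congr rfl fun k _ => by rw [hAB k y hy]; ring
    · intro w' hw'cd hw'0 hw'1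
      have hdw'_cont : Continuous (deriv w') := (contDiff_one_iff_deriv.mp hw'cd).2
      have hdiffw' : Differentiable ℝ w' := (contDiff_one_iff_deriv.mp hw'cd).1
      have step1 : ∫ y in (0:ℝ)..1, deriv v y * deriv w' y
          = ∫ y in (0:ℝ)..1, q y * deriv w' y := by
        refine intervalIntegral.integral_congr_ae ?_
        filter_upwards [haeI] with y hy hmem
        rw [Set.uIoc_of_le zero_le_one] at hmem
        rw [hy (Set.Ioc_subset_Icc_self hmem)]
      have hker : ∀ k : Fin M, ∫ y in (0:ℝ)..1, u k y * deriv w' y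
          = ∫ y in (0:ℝ)..1, hfun M xp k y * w' y := by
        intro k
        by_cases hk : k.val = 0
        · have hu0 : u k = fun _ => (1:ℝ) := by simp [hu, hk]
          have hf0 : hfun M xp k = fun _ => (0:ℝ) := by simp [hfun, hk]
          rw [hu0, hf0]
          simp only [one_mul, zero_mul]
          rw [intervalIntegral.integral_deriv_eq_sub (fun x _ => hdiffw' x)
            (hdw'_cont.intervalIntegrable _ _), hw'1, hw'0]
          simp
        · have parts := intervalIntegral.integral_mul_deriv_eq_deriv_mul
            (u := u k) (u' := fun y => -(hfun M xp k y)) (v := w') (v' := deriv w')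
            (fun x _ => hu_deriv k x) (fun x _ => (hdiffw' x).hasDerivAt)
            (((hfun_continuous k).neg).intervalIntegrable 0 1)
            (hdw'_cont.intervalIntegrable 0 1)
          rw [hw'0, hw'1] at parts
          have hnn : ∫ y in (0:ℝ)..1, (fun y => -(hfun M xp k y)) y * w' y
              = - ∫ y in (0:ℝ)..1, hfun M xp k y * w' y := by
            rw [← intervalIntegral.integral_neg]
            exact intervalIntegral.integral_congr fun y _ => by ring
          rw [hnn] at parts
          rw [parts]; ring
      have step2 : ∫ y in (0:ℝ)..1, q y * deriv w' y
          = ∑ k : Fin M, c k * ∫ y in (0:ℝ)..1, u k y * deriv w' y := by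
        have hqe : ∀ y, q y * deriv w' y = ∑ k : Fin M, c k * (u k y * deriv w' y) := fun y => by
          show (∑ k : Fin M, c k * u k y) * deriv w' y = _
          rw [Finset.sum_mul]
          exact Finset.sum_congr rfl fun k _ => by ring
        rw [intervalIntegral.integral_congr (fun y _ => hqe y),
          intervalIntegral.integral_finset_sum (f := fun k y => c k * (u k y * deriv w' y)) (fun k _ =>
            (continuous_const.mul ((hu_cont k).mul hdw'_cont)).intervalIntegrable _ _)]
        exact Finset.sum_congr rfl fun k _ => intervalIntegral.integral_const_mul _ _
      have step3 : ∫ y in (0:ℝ)..1, (fun y => ∑ k : Fin M, c k * hfun M xp k y) y * w' y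
          = ∑ k : Fin M, c k * ∫ y in (0:ℝ)..1, hfun M xp k y * w' y := by
        have hqe : ∀ y, (∑ k : Fin M, c k * hfun M xp k y) * w' y
            = ∑ k : Fin M, c k * (hfun M xp k y * w' y) := fun y => by
          rw [Finset.sum_mul]
          exact Finset.sum_congr rfl fun k _ => by ring
        rw [intervalIntegral.integral_congr (fun y _ => hqe y),
          intervalIntegral.integral_finset_sum (f := fun k y => c k * (hfun M xp k y * w' y)) (fun k _ =>
            (continuous_const.mul ((hfun_continuous k).mul
              (hw'cd.continuous))).intervalIntegrable _ _)]
        exact Finset.sum_congr rfl fun k _ => intervalIntegral.integral_const_mul _ _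
      rw [step1, step2, step3]
      exact Finset.sum_congr rfl fun k _ => by rw [hker k]
  · -- Part 2: v is piecewise cubic
    intro i
    set s := xp i.castSucc with hs
    set e := xp i.succ with he
    have hse : s < e := hxp (Fin.castSucc_lt_succ : i.castSucc < i.succ)
    have hs0 : (0:ℝ) ≤ s := by rw [hs, ← hxp0]; exact hxp.monotone (Fin.zero_le _)
    have he1 : e ≤ 1 := by rw [he, ← hxpM]; exact hxp.monotone (Fin.le_last _)
    have hquad : ∀ k : Fin M, ∃ A B C : ℝ, ∀ z ∈ Set.Icc s e, u k z = A + B * z + C * z^2 := by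
      intro k
      by_cases hk : k.val = 0
      · exact ⟨1, 0, 0, fun z _ => by simp [hu, hk]⟩
      · have hkM := k.isLt
        obtain ⟨a, b, hab⟩ := hat_affine_on (j := k.val) hxp (by omega) (by omega) i
        refine ⟨Phi (hat M xp k.val) s + a * s^2/2 + b * s, -b, -(a/2), fun z hz => ?_⟩
        have hz1 : s ≤ z := hz.1
        have hz2 : z ≤ e := hz.2
        have hsplit : Phi (hat M xp k.val) z
            = Phi (hat M xp k.val) s - ∫ t in s..z, hat M xp k.val t := by
          have hadd := intervalIntegral.integral_add_adjacent_intervals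
            ((hat_continuous (M := M) (xp := xp) k.val).intervalIntegrable (μ := volume) s z)
            ((hat_continuous (M := M) (xp := xp) k.val).intervalIntegrable (μ := volume) z 1)
          unfold Phi
          linarith
        have hint : ∫ t in s..z, hat M xp k.val t = a * ((z^2 - s^2)/2) + b * (z - s) := by
          rw [intervalIntegral.integral_congr (g := fun t => a * t + b) (fun t ht => by
            rw [Set.uIcc_of_le hz1] at ht
            exact hab t ⟨ht.1, le_trans ht.2 hz2⟩)]
          have h1 : IntervalIntegrable (fun t : ℝ => a * t) volume s z :=
            Continuous.intervalIntegrable (by fun_prop) _ _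
          have h2 : IntervalIntegrable (fun _ : ℝ => b) volume s z :=
            Continuous.intervalIntegrable (by fun_prop) _ _
          rw [intervalIntegral.integral_add h1 h2,
            intervalIntegral.integral_const_mul, integral_id,
            intervalIntegral.integral_const]
          simp only [smul_eq_mul]
          ring
        have hue : u k z = Phi (hat M xp k.val) z := by simp [hu, hk]
        rw [hue, hsplit, hint]
        ring
    choose A B C hABC using hquad
    set E0 := ∑ k : Fin M, c k * A k with hE0
    set E1 := ∑ k : Fin M, c k * B k with hE1
    set E2 := ∑ k : Fin M, c k * C k with hE2
    have hq_on : ∀ z ∈ Set.Icc s e, q z = E0 + E1 * z + E2 * z^2 := by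
      intro z hz
      show (∑ k : Fin M, c k * u k z) = _
      rw [hE0, hE1, hE2, Finset.sum_mul, Finset.sum_mul, ← Finset.sum_add_distrib,
        ← Finset.sum_add_distrib]
      exact Finset.sum_congr rfl fun k _ => by rw [hABC k z hz]; ring
    refine ⟨Polynomial.C (v s - (E0 * s + E1 * s^2/2 + E2 * s^3/3))
      + Polynomial.C E0 * Polynomial.X
      + Polynomial.C (E1/2) * Polynomial.X^2
      + Polynomial.C (E2/3) * Polynomial.X^3, ?_, ?_⟩
    · compute_degree
    · intro y hy
      have hsy : s ≤ y := hy.1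
      have hy1 : y ≤ e := hy.2
      have hftc : v y = v s + ∫ t in s..y, deriv v t := by
        have := intervalIntegral.integral_deriv_eq_sub (f := v) (a := s) (b := y)
          (fun x _ => (hv.differentiable one_ne_zero) x) (hg_cont.intervalIntegrable _ _)
        linarith
      have hcong : ∫ t in s..y, deriv v t = ∫ t in s..y, (E0 + E1 * t + E2 * t^2) := by
        refine intervalIntegral.integral_congr_ae ?_
        filter_upwards [haeI] with t ht hmem
        rw [Set.uIoc_of_le hsy] at hmem
        have htIcc : t ∈ Set.Icc (0:ℝ) 1 :=
          ⟨le_trans hs0 (le_of_lt hmem.1), le_trans hmem.2 (le_trans hy1 he1)⟩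
        rw [ht htIcc, hq_on t ⟨le_of_lt hmem.1, le_trans hmem.2 hy1⟩]
      have hcomp : ∫ t in s..y, (E0 + E1 * t + E2 * t^2)
          = E0 * (y - s) + E1 * ((y^2 - s^2)/2) + E2 * ((y^3 - s^3)/3) := by
        have h1 : IntervalIntegrable (fun t : ℝ => E0 + E1 * t) volume s y :=
          Continuous.intervalIntegrable (by fun_prop) _ _
        have h2 : IntervalIntegrable (fun t : ℝ => E2 * t^2) volume s y :=
          Continuous.intervalIntegrable (by fun_prop) _ _
        have h3 : IntervalIntegrable (fun _ : ℝ => E0) volume s y :=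
          Continuous.intervalIntegrable (by fun_prop) _ _
        have h4 : IntervalIntegrable (fun t : ℝ => E1 * t) volume s y :=
          Continuous.intervalIntegrable (by fun_prop) _ _
        rw [intervalIntegral.integral_add h1 h2,
          intervalIntegral.integral_add h3 h4,
          intervalIntegral.integral_const, intervalIntegral.integral_const_mul,
          intervalIntegral.integral_const_mul, integral_id,
          integral_pow]
        simp only [smul_eq_mul]
        norm_num
        ring
      rw [hftc, hcong, hcomp]
      simp only [Polynomial.eval_add, Polynomial.eval_mul, Polynomial.eval_pow,
        Polynomial.eval_C, Polynomial.eval_X]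
      ring
end
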